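/- arXiv:1406.7872 — 2 statements merged into one kernel-verified Lean document; each statement's English description precedes it below -/
import Mathlib

section
/- Kahn–Lovász theorem: Let G be a (simple) graph on 2n vertices v₁,…,v_{2n} with deg(vᵢ) = dᵢ ≥ 1 for all i. Then the number of perfect matchings of G satisfies |M_perf(G)| ≤ Π_{i=1}^{2n} (dᵢ!)^{1/(2dᵢ)}. -/
open Finset

namespace KL


noncomputable def hh (d : ℕ) : ℝ := Real.log (Nat.factorial d) / d

lemma hh_zero : hh 0 = 0 := by simp [hh]

lemma hh_cast (d : ℕ) (hd : 1 ≤ d) : (d : ℝ) * hh d = Real.log (Nat.factorial d) := by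
  have h : (d : ℝ) ≠ 0 := by
    have : 0 < d := hd
    exact_mod_cast this.ne'
  unfold hh
  field_simp

/-- key identity : `d * hh d + log (d+1) = (d+1) * hh (d+1)`. -/
lemma hh_succ (d : ℕ) : ((d:ℝ)) * hh d + Real.log ((d:ℝ)+1) = ((d:ℝ)+1) * hh (d+1) := by
  rcases Nat.eq_zero_or_pos d with rfl | hd
  · simp [hh]
  · have h1 := hh_cast d hd
    have h2 := hh_cast (d+1) (by omega)
    push_cast at h2
    rw [h1, h2, Nat.factorial_succ]
    push_cast
    rw [Real.log_mul (by positivity) (by positivity : (Nat.factorial d : ℝ) ≠ 0)]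
    ring

/-- Jensen-type inequality. -/
lemma jensen {ι : Type} (t : Finset ι) (c : ι → ℕ) (hD : 0 < t.card) (hS : 0 < ∑ i ∈ t, c i) :
    ((∑ i ∈ t, c i : ℕ) : ℝ) * Real.log ((∑ i ∈ t, c i : ℕ) : ℝ) ≤
      ((∑ i ∈ t, c i : ℕ) : ℝ) * Real.log (t.card : ℝ)
        + ∑ i ∈ t, ((c i : ℝ) * Real.log (c i)) := by
  set S : ℝ := ((∑ i ∈ t, c i : ℕ) : ℝ) with hSdef
  have hSpos : (0:ℝ) < S := by rw [hSdef]; exact_mod_cast hS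
  have hDpos : (0:ℝ) < (t.card : ℝ) := by exact_mod_cast hD
  set t' := t.filter (fun i => 0 < c i) with ht'
  have hsub : t' ⊆ t := filter_subset _ _
  have hS' : ∑ i ∈ t', (c i : ℝ) = S := by
    rw [hSdef, Nat.cast_sum]
    refine Finset.sum_subset hsub ?_
    intro i hi hni
    simp only [ht', mem_filter, hi, true_and, not_lt, Nat.le_zero] at hni
    simp [hni]
  have hlog' : ∑ i ∈ t', ((c i : ℝ) * Real.log (c i)) = ∑ i ∈ t, ((c i : ℝ) * Real.log (c i)) := by
    refine Finset.sum_subset hsub ?_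
    intro i hi hni
    simp only [ht', mem_filter, hi, true_and, not_lt, Nat.le_zero] at hni
    simp [hni]
  have key : ∀ i ∈ t', (c i : ℝ) * Real.log S - (c i : ℝ) * Real.log (c i)
      - (c i : ℝ) * Real.log (t.card : ℝ) ≤ S / (t.card : ℝ) - (c i : ℝ) := by
    intro i hi
    have hc : 0 < c i := (mem_filter.mp hi).2
    have hcR : (0:ℝ) < (c i : ℝ) := by exact_mod_cast hc
    have hx : (0:ℝ) < S / ((c i : ℝ) * (t.card : ℝ)) := by positivity
    have hlog := Real.log_le_sub_one_of_pos hx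
    rw [Real.log_div (ne_of_gt hSpos) (by positivity),
      Real.log_mul (ne_of_gt hcR) (ne_of_gt hDpos)] at hlog
    have h2 := mul_le_mul_of_nonneg_left hlog hcR.le
    have e1 : (c i : ℝ) * (S / ((c i : ℝ) * (t.card : ℝ)) - 1) = S / (t.card : ℝ) - (c i : ℝ) := by
      field_simp
    rw [e1] at h2
    nlinarith [h2]
  have hsum := Finset.sum_le_sum key
  rw [Finset.sum_sub_distrib, Finset.sum_sub_distrib, ← Finset.sum_mul, ← Finset.sum_mul, hS',
    hlog', Finset.sum_sub_distrib, Finset.sum_const, hS'] at hsum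
  have hcard : (t'.card : ℝ) ≤ (t.card : ℝ) := by exact_mod_cast Finset.card_le_card hsub
  have hle : (t'.card : ℝ) * (S / (t.card : ℝ)) ≤ S := by
    have : (t'.card : ℝ) * (S / (t.card : ℝ)) ≤ (t.card : ℝ) * (S / (t.card : ℝ)) := by
      apply mul_le_mul_of_nonneg_right hcard (by positivity)
    calc (t'.card : ℝ) * (S / (t.card : ℝ)) ≤ (t.card : ℝ) * (S / (t.card : ℝ)) := this
      _ = S := by field_simp
  rw [nsmul_eq_mul] at hsum
  linarith

lemma Fnonneg (e : ℕ) : 0 ≤ ((e:ℝ)+3)*((e:ℝ)+2)*Real.log ((e:ℝ)+2)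
    - ((e:ℝ)+1)*((e:ℝ)+2)*Real.log ((e:ℝ)+3) - 2*Real.log (Nat.factorial (e+2)) := by
  induction e with
  | zero =>
      norm_num [Nat.factorial]
      have h4 : Real.log 3 ≤ Real.log 4 := Real.log_le_log (by norm_num) (by norm_num)
      have h2 : Real.log 4 = 2 * Real.log 2 := by
        rw [show (4:ℝ) = 2^2 by norm_num, Real.log_pow]; push_cast; ring
      nlinarith [h4, h2]
  | succ e ih =>
      have hx : (0:ℝ) ≤ (e:ℝ) := Nat.cast_nonneg e
      have hfact : Real.log (Nat.factorial (e+1+2)) = Real.log ((e:ℝ)+3) + Real.log (Nat.factorial (e+2)) := by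
        rw [show e+1+2 = (e+2)+1 by ring, Nat.factorial_succ]
        push_cast
        rw [Real.log_mul (by positivity) (by positivity : (Nat.factorial (e+2) : ℝ) ≠ 0)]
        ring_nf
      have hconc : Real.log ((e:ℝ)+4) + Real.log ((e:ℝ)+2) ≤ 2 * Real.log ((e:ℝ)+3) := by
        have hmul : Real.log (((e:ℝ)+4) * ((e:ℝ)+2)) ≤ Real.log (((e:ℝ)+3)^2) :=
          Real.log_le_log (by positivity) (by nlinarith)
        rw [Real.log_mul (by positivity) (by positivity), Real.log_pow] at hmul
        push_cast at hmul
        linarith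
      have hmn : (0:ℝ) ≤ (((e:ℝ)+2)*((e:ℝ)+3)) * (2 * Real.log ((e:ℝ)+3) - Real.log ((e:ℝ)+4) - Real.log ((e:ℝ)+2)) := by
        apply mul_nonneg (by positivity)
        linarith
      push_cast
      push_cast at hfact
      rw [hfact]
      ring_nf
      ring_nf at ih hmn
      linarith [ih, hmn]

lemma hh_concave (e : ℕ) : hh (e+1) + hh (e+3) ≤ 2 * hh (e+2) := by
  have hF := Fnonneg e
  set A := Real.log (Nat.factorial (e+1)) with hA
  set B := Real.log (Nat.factorial (e+2)) with hB
  set C := Real.log (Nat.factorial (e+3)) with hC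
  have h1 : (0:ℝ) < (e:ℝ)+1 := by positivity
  have h2 : (0:ℝ) < (e:ℝ)+2 := by positivity
  have h3 : (0:ℝ) < (e:ℝ)+3 := by positivity
  have hab : B = A + Real.log ((e:ℝ)+2) := by
    rw [hA, hB, show e+2 = (e+1)+1 by ring, Nat.factorial_succ]
    push_cast
    rw [Real.log_mul (by positivity) (by positivity : (Nat.factorial (e+1) : ℝ) ≠ 0)]
    ring_nf
  have hbc : C = B + Real.log ((e:ℝ)+3) := by
    rw [hB, hC, show e+3 = (e+2)+1 by ring, Nat.factorial_succ]
    push_cast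
    rw [Real.log_mul (by positivity) (by positivity : (Nat.factorial (e+2) : ℝ) ≠ 0)]
    ring_nf
  have P : (((e:ℝ)+3)*A + ((e:ℝ)+1)*C) * ((e:ℝ)+2) ≤ 2*B * (((e:ℝ)+1)*((e:ℝ)+3)) := by
    rw [hab] at hF
    rw [hbc, hab]
    nlinarith [hF]
  have g1 : hh (e+1) = A / ((e:ℝ)+1) := by rw [hh, hA]; push_cast; ring
  have g2 : hh (e+2) = B / ((e:ℝ)+2) := by rw [hh, hB]; push_cast; ring
  have g3 : hh (e+3) = C / ((e:ℝ)+3) := by rw [hh, hC]; push_cast; ring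
  rw [g1, g2, g3, div_add_div _ _ (ne_of_gt h1) (ne_of_gt h3), mul_div_assoc',
    div_le_div_iff₀ (by positivity) (by positivity)]
  linarith [P]

lemma hh_point (d eps : ℕ) (h2 : eps ≤ 2) (h1 : eps < d) :
    hh (d - eps) ≤ hh d - (eps:ℝ) * (hh d - hh (d-1)) := by
  interval_cases eps
  · simp
  · push_cast
    ring_nf
    simp
  · obtain ⟨e, rfl⟩ : ∃ e, d = e + 3 := ⟨d - 3, by omega⟩
    have hc := hh_concave e
    have e1 : e + 3 - 2 = e + 1 := by omega
    have e2 : e + 3 - 1 = e + 2 := by omega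
    rw [e1, e2]
    push_cast
    linarith

section Graph
variable {V : Type} {G : SimpleGraph V}

lemma finite_subgraph [Finite V] (G : SimpleGraph V) : Finite G.Subgraph := by
  have : Function.Injective (fun M : G.Subgraph => (M.verts, M.Adj)) := by
    intro M N h
    simp only [Prod.mk.injEq] at h
    exact SimpleGraph.Subgraph.ext h.1 h.2
  exact Finite.of_injective _ this

noncomputable def deg (G : SimpleGraph V) (v : V) : ℕ := (G.neighborSet v).ncard

noncomputable def pmc (G : SimpleGraph V) : ℕ :=
  Nat.card {M : G.Subgraph // M.IsPerfectMatching}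

variable {M : G.Subgraph}

noncomputable def pt (hM : M.IsPerfectMatching) (v : V) : V := (hM.1 (hM.2 v)).choose

lemma pt_adj (hM : M.IsPerfectMatching) (v : V) : M.Adj v (pt hM v) :=
  (hM.1 (hM.2 v)).choose_spec.1

lemma pt_eq (hM : M.IsPerfectMatching) {v w : V} (h : M.Adj v w) : pt hM v = w :=
  ((hM.1 (hM.2 v)).choose_spec.2 w h).symm

lemma pt_pt (hM : M.IsPerfectMatching) (v : V) : pt hM (pt hM v) = v :=
  pt_eq hM ((pt_adj hM v).symm)

lemma pt_gadj (hM : M.IsPerfectMatching) (v : V) : G.Adj v (pt hM v) :=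
  M.adj_sub (pt_adj hM v)

lemma pt_ne (hM : M.IsPerfectMatching) (v : V) : pt hM v ≠ v :=
  (pt_gadj hM v).ne'

lemma pt_mem_nbr (hM : M.IsPerfectMatching) (v : V) : pt hM v ∈ G.neighborSet v :=
  pt_gadj hM v

end Graph
section Del
variable {V : Type} {G : SimpleGraph V} {v u : V}

lemma mem_del {a v u : V} : a ∈ ({v, u}ᶜ : Set V) ↔ a ≠ v ∧ a ≠ u := by
  simp [not_or]

variable (G v u)

@[simps]
def fwdSub (M : G.Subgraph) : (G.induce ({v, u}ᶜ : Set V)).Subgraph where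
  verts := Set.univ
  Adj a b := M.Adj ↑a ↑b
  adj_sub := fun {a b} h => M.adj_sub h
  edge_vert := fun {a b} _ => Set.mem_univ a
  symm := ⟨fun a b h => h.symm⟩

def bwdSub (hvu : G.Adj v u) (M' : (G.induce ({v, u}ᶜ : Set V)).Subgraph) : G.Subgraph where
  verts := Set.univ
  Adj a b := (∃ (ha : a ∈ ({v, u}ᶜ : Set V)) (hb : b ∈ ({v, u}ᶜ : Set V)), M'.Adj ⟨a, ha⟩ ⟨b, hb⟩)
    ∨ (a = v ∧ b = u) ∨ (a = u ∧ b = v)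
  adj_sub := by
    rintro a b (⟨ha, hb, h⟩ | ⟨rfl, rfl⟩ | ⟨rfl, rfl⟩)
    · exact M'.adj_sub h
    · exact hvu
    · exact hvu.symm
  edge_vert := fun _ => Set.mem_univ _
  symm := by
    constructor
    rintro a b (⟨ha, hb, h⟩ | ⟨rfl, rfl⟩ | ⟨rfl, rfl⟩)
    · exact Or.inl ⟨hb, ha, h.symm⟩
    · exact Or.inr (Or.inr ⟨rfl, rfl⟩)
    · exact Or.inr (Or.inl ⟨rfl, rfl⟩)

variable {G v u}

lemma pt_eq' {M : G.Subgraph} (hM : M.IsPerfectMatching) {a b : V} (h : M.Adj a b) :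
    (hM.1 (hM.2 a)).choose = b := (hM.1 (hM.2 a)).choose_spec.2 b h |>.symm

lemma adj_unique {M : G.Subgraph} (hM : M.IsPerfectMatching) {a b c : V}
    (h1 : M.Adj a b) (h2 : M.Adj a c) : b = c := by
  rw [← pt_eq' hM h1, ← pt_eq' hM h2]

lemma fwd_isPM {M : G.Subgraph} (hM : M.IsPerfectMatching) (hadj : M.Adj v u) :
    (fwdSub G v u M).IsPerfectMatching := by
  constructor
  · rintro ⟨a, ha⟩ -
    obtain ⟨hav, hau⟩ := mem_del.mp ha
    obtain ⟨w, hw, huniq⟩ := hM.1 (hM.2 a)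
    have hwv : w ≠ v := by
      rintro rfl
      exact hau (adj_unique hM hw.symm hadj)
    have hwu : w ≠ u := by
      rintro rfl
      exact hav (adj_unique hM hw.symm hadj.symm)
    refine ⟨⟨w, mem_del.mpr ⟨hwv, hwu⟩⟩, hw, ?_⟩
    rintro ⟨y, hy⟩ hadjy
    exact Subtype.ext (huniq y hadjy)
  · intro a
    exact Set.mem_univ a

lemma bwd_isPM (hvu : G.Adj v u) {M' : (G.induce ({v, u}ᶜ : Set V)).Subgraph}
    (hM' : M'.IsPerfectMatching) : (bwdSub G v u hvu M').IsPerfectMatching := by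
  constructor
  · rintro a -
    by_cases hav : a = v
    · subst hav
      refine ⟨u, Or.inr (Or.inl ⟨rfl, rfl⟩), ?_⟩
      rintro y (⟨ha, hy, h⟩ | ⟨-, rfl⟩ | ⟨h1, -⟩)
      · exact absurd rfl (mem_del.mp ha).1
      · rfl
      · exact absurd h1 hvu.ne
    by_cases hau : a = u
    · subst hau
      refine ⟨v, Or.inr (Or.inr ⟨rfl, rfl⟩), ?_⟩
      rintro y (⟨ha, hy, h⟩ | ⟨h1, -⟩ | ⟨-, rfl⟩)
      · exact absurd rfl (mem_del.mp ha).2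
      · exact absurd h1.symm hvu.ne
      · rfl
    · have ha : a ∈ ({v, u}ᶜ : Set V) := mem_del.mpr ⟨hav, hau⟩
      obtain ⟨w, hw, huniq⟩ := hM'.1 (hM'.2 ⟨a, ha⟩)
      refine ⟨↑w, Or.inl ⟨ha, w.2, hw⟩, ?_⟩
      rintro y (⟨ha', hy, h⟩ | ⟨h1, -⟩ | ⟨h1, -⟩)
      · exact congrArg Subtype.val (huniq ⟨y, hy⟩ h)
      · exact absurd h1 hav
      · exact absurd h1 hau
  · intro a
    exact Set.mem_univ a

lemma bwd_fwd {M : G.Subgraph} (hM : M.IsPerfectMatching) (hadj : M.Adj v u)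
    (hvu : G.Adj v u) : bwdSub G v u hvu (fwdSub G v u M) = M := by
  apply SimpleGraph.Subgraph.ext (hM.2.verts_eq_univ.symm)
  ext a b
  constructor
  · rintro (⟨ha, hb, h⟩ | ⟨rfl, rfl⟩ | ⟨rfl, rfl⟩)
    · exact h
    · exact hadj
    · exact hadj.symm
  · intro h
    by_cases hav : a = v
    · subst hav
      exact Or.inr (Or.inl ⟨rfl, adj_unique hM h hadj⟩)
    by_cases hau : a = u
    · subst hau
      exact Or.inr (Or.inr ⟨rfl, adj_unique hM h hadj.symm⟩)
    by_cases hbv : b = v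
    · subst hbv
      exact absurd (adj_unique hM h.symm hadj) hau
    by_cases hbu : b = u
    · subst hbu
      exact absurd (adj_unique hM h.symm hadj.symm) hav
    · exact Or.inl ⟨mem_del.mpr ⟨hav, hau⟩, mem_del.mpr ⟨hbv, hbu⟩, h⟩

lemma fwd_bwd (hvu : G.Adj v u) {M' : (G.induce ({v, u}ᶜ : Set V)).Subgraph}
    (hM' : M'.IsPerfectMatching) : fwdSub G v u (bwdSub G v u hvu M') = M' := by
  apply SimpleGraph.Subgraph.ext (hM'.2.verts_eq_univ.symm)
  ext a b
  constructor
  · rintro (⟨ha', hb', h⟩ | ⟨h1, -⟩ | ⟨h1, -⟩)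
    · exact h
    · exact absurd h1 (mem_del.mp a.2).1
    · exact absurd h1 (mem_del.mp a.2).2
  · intro h
    exact Or.inl ⟨a.2, b.2, h⟩

noncomputable def delEquiv (hvu : G.Adj v u) :
    {M : {M : G.Subgraph // M.IsPerfectMatching} // M.val.Adj v u} ≃
      {M' : (G.induce ({v, u}ᶜ : Set V)).Subgraph // M'.IsPerfectMatching} where
  toFun := fun p => ⟨fwdSub G v u p.1.1, fwd_isPM p.1.2 p.2⟩
  invFun := fun q => ⟨⟨bwdSub G v u hvu q.1, bwd_isPM hvu q.2⟩, Or.inr (Or.inl ⟨rfl, rfl⟩)⟩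
  left_inv := fun p => Subtype.ext (Subtype.ext (bwd_fwd p.1.2 p.2 hvu))
  right_inv := fun q => Subtype.ext (fwd_bwd hvu q.2)

end Del
section Count
variable {V : Type} [Fintype V] [DecidableEq V] {G : SimpleGraph V} {M : G.Subgraph}

lemma ncard_inter_single (N : Set V) (x : V) [Decidable (x ∈ N)] :
    (N ∩ {x}).ncard = if x ∈ N then 1 else 0 := by
  by_cases h : x ∈ N
  · rw [if_pos h, Set.inter_eq_right.mpr (Set.singleton_subset_iff.mpr h), Set.ncard_singleton]
  · rw [if_neg h]
    have he : N ∩ {x} = ∅ := by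
      ext a
      simp only [Set.mem_inter_iff, Set.mem_singleton_iff, Set.mem_empty_iff_false, iff_false,
        not_and]
      rintro ha rfl
      exact h ha
    simp [he]

lemma ncard_inter_pair (N : Set V) {x y : V} (hxy : x ≠ y) [Decidable (x ∈ N)]
    [Decidable (y ∈ N)] :
    (N ∩ {x, y}).ncard = (if x ∈ N then 1 else 0) + (if y ∈ N then 1 else 0) := by
  rw [Set.insert_eq, Set.inter_union_distrib_left,
    Set.ncard_union_eq ?_ (Set.toFinite _) (Set.toFinite _),
    ncard_inter_single, ncard_inter_single]
  exact Set.disjoint_of_subset Set.inter_subset_right Set.inter_subset_right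
    (Set.disjoint_singleton.mpr hxy)

lemma deg_pos (hM : M.IsPerfectMatching) (k : V) : 1 ≤ deg G k := by
  rw [deg, Nat.one_le_iff_ne_zero, ← Nat.pos_iff_ne_zero]
  rw [Set.ncard_pos (Set.toFinite _)]
  exact ⟨pt hM k, pt_gadj hM k⟩

lemma mem_A {hM : M.IsPerfectMatching} {a k : V} :
    a ∈ (univ : Finset V) \ {k, pt hM k} ↔ a ≠ k ∧ a ≠ pt hM k := by
  simp [not_or]

lemma pt_maps_A (hM : M.IsPerfectMatching) (k : V) :
    ∀ a ∈ (univ : Finset V) \ {k, pt hM k}, pt hM a ∈ (univ : Finset V) \ {k, pt hM k} := by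
  intro a ha
  obtain ⟨h1, h2⟩ := mem_A.mp ha
  refine mem_A.mpr ⟨?_, ?_⟩
  · intro h
    exact h2 (by rw [← h, pt_pt])
  · intro h
    have := congrArg (pt hM) h
    rw [pt_pt, pt_pt] at this
    exact h1 this

lemma sum_eps (hM : M.IsPerfectMatching) (k : V) :
    (∑ v ∈ (univ : Finset V) \ {k, pt hM k}, (G.neighborSet k ∩ {v, pt hM v}).ncard) + 2
      = 2 * deg G k := by
  classical
  set p := pt hM with hp
  set A := (univ : Finset V) \ {k, p k} with hA
  have hsplit : ∀ v ∈ A, (G.neighborSet k ∩ {v, p v}).ncard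
      = (if v ∈ G.neighborSet k then 1 else 0) + (if p v ∈ G.neighborSet k then 1 else 0) := by
    intro v _
    exact ncard_inter_pair _ (Ne.symm (pt_ne hM v))
  rw [Finset.sum_congr rfl hsplit, Finset.sum_add_distrib]
  have hfilter : A.filter (fun v => v ∈ G.neighborSet k)
      = ((G.neighborSet k).toFinite.toFinset).erase (p k) := by
    ext a
    simp only [mem_filter, Finset.mem_erase, Set.Finite.mem_toFinset, hA, mem_sdiff, mem_univ,
      true_and, mem_insert, mem_singleton, not_or]
    constructor
    · rintro ⟨⟨h1, h2⟩, h3⟩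
      exact ⟨h2, h3⟩
    · rintro ⟨h2, h3⟩
      exact ⟨⟨fun h => G.irrefl (h ▸ h3), h2⟩, h3⟩
  have hmem : p k ∈ (G.neighborSet k).toFinite.toFinset := by
    rw [Set.Finite.mem_toFinset]; exact pt_gadj hM k
  have hpos : 0 < ((G.neighborSet k).toFinite.toFinset).card := Finset.card_pos.mpr ⟨p k, hmem⟩
  have hcard : (A.filter (fun v => v ∈ G.neighborSet k)).card + 1 = deg G k := by
    rw [hfilter, Finset.card_erase_of_mem hmem, deg,
      Set.ncard_eq_toFinset_card _ (Set.toFinite _)]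
    omega
  have h1 : (∑ v ∈ A, (if v ∈ G.neighborSet k then 1 else 0)) + 1 = deg G k := by
    rw [← hcard]
    congr 1
    simpa using Finset.sum_boole (fun v => v ∈ G.neighborSet k) A
  have h2 : ∑ v ∈ A, (if p v ∈ G.neighborSet k then 1 else 0)
      = ∑ v ∈ A, (if v ∈ G.neighborSet k then 1 else 0) := by
    refine Finset.sum_nbij' p p (pt_maps_A hM k) (pt_maps_A hM k) ?_ ?_ ?_
    · intro a _; exact pt_pt hM a
    · intro a _; exact pt_pt hM a
    · intro a _; rfl
  omega

end Count


section Count2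
variable {V : Type} [Fintype V] [DecidableEq V] {G : SimpleGraph V} {M : G.Subgraph}

lemma eps_le_two (N : Set V) (v w : V) : (N ∩ {v, w}).ncard ≤ 2 := by
  have h1 := Set.ncard_le_ncard (Set.inter_subset_right (s := N) (t := {v,w})) (Set.toFinite _)
  have h2 : ({v, w} : Set V).ncard ≤ 2 := by
    have := Set.ncard_insert_le v ({w} : Set V)
    simpa [Set.ncard_singleton] using this
  omega

lemma eps_lt_deg (hM : M.IsPerfectMatching) {k v : V} (hv1 : v ≠ k) (hv2 : v ≠ pt hM k) :
    (G.neighborSet k ∩ {v, pt hM v}).ncard < deg G k := by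
  have hnotmem : pt hM k ∉ G.neighborSet k ∩ {v, pt hM v} := by
    rintro ⟨-, h⟩
    rcases h with h | h
    · exact hv2 h.symm
    · apply hv1
      have := congrArg (pt hM) h
      rw [pt_pt, pt_pt] at this
      exact this.symm
  have hsub : insert (pt hM k) (G.neighborSet k ∩ {v, pt hM v}) ⊆ G.neighborSet k := by
    rw [Set.insert_subset_iff]
    exact ⟨pt_gadj hM k, Set.inter_subset_left⟩
  have hle := Set.ncard_le_ncard hsub (Set.toFinite _)
  rw [Set.ncard_insert_of_notMem hnotmem (Set.toFinite _)] at hle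
  rw [deg]
  omega

lemma deg_induce (s : Set V) (k : ↥s) :
    deg (G.induce s) k = ((G.neighborSet ↑k) ∩ s).ncard := by
  rw [deg]
  have h : (G.induce s).neighborSet k = Subtype.val ⁻¹' (G.neighborSet ↑k) := rfl
  rw [h, ← Set.ncard_image_of_injective _ Subtype.val_injective,
    Set.image_preimage_eq_inter_range, Subtype.range_val]

lemma deg_del (v u : V) (k : ↥({v, u}ᶜ : Set V)) :
    deg (G.induce ({v, u}ᶜ : Set V)) k = ((G.neighborSet ↑k) \ {v, u}).ncard := by
  rw [deg_induce, Set.diff_eq]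

lemma per_k (hM : M.IsPerfectMatching) (k : V) :
    ∑ v ∈ (univ : Finset V) \ {k, pt hM k}, hh ((G.neighborSet k \ {v, pt hM v}).ncard)
      ≤ (Fintype.card V) * hh (deg G k) - 2 * Real.log (deg G k) := by
  classical
  set p := pt hM with hp
  set A := (univ : Finset V) \ {k, p k} with hA
  have hd1 : 1 ≤ deg G k := deg_pos hM k
  have hpoint : ∀ v ∈ A, hh ((G.neighborSet k \ {v, p v}).ncard)
      ≤ hh (deg G k) - ((G.neighborSet k ∩ {v, p v}).ncard : ℝ) * (hh (deg G k) - hh (deg G k - 1)) := by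
    intro v hv
    obtain ⟨hv1, hv2⟩ := mem_A.mp hv
    have heq : (G.neighborSet k ∩ {v, p v}).ncard + (G.neighborSet k \ {v, p v}).ncard = deg G k :=
      Set.ncard_inter_add_ncard_diff_eq_ncard _ _ (Set.toFinite _)
    have h2 : (G.neighborSet k ∩ {v, p v}).ncard ≤ 2 := eps_le_two _ _ _
    have hlt : (G.neighborSet k ∩ {v, p v}).ncard < deg G k := eps_lt_deg hM hv1 hv2
    have hsub : (G.neighborSet k \ {v, p v}).ncard = deg G k - (G.neighborSet k ∩ {v, p v}).ncard := by
      omega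
    rw [hsub]
    exact hh_point (deg G k) _ h2 hlt
  have hsum := Finset.sum_le_sum hpoint
  rw [Finset.sum_sub_distrib, Finset.sum_const, ← Finset.sum_mul] at hsum
  have hs := sum_eps hM k
  have hsR : (∑ v ∈ A, ((G.neighborSet k ∩ {v, p v}).ncard : ℝ)) = 2*(deg G k : ℝ) - 2 := by
    have hc := congrArg (fun n : ℕ => (n : ℝ)) hs
    push_cast at hc
    linarith
  have h2N : 2 ≤ Fintype.card V := by
    have : ({k, p k} : Finset V) ⊆ univ := Finset.subset_univ _
    have hcardpair : ({k, p k} : Finset V).card = 2 := by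
      rw [Finset.card_insert_of_notMem (by simp [hp, Ne.symm (pt_ne hM k)]), Finset.card_singleton]
    calc 2 = ({k, p k} : Finset V).card := hcardpair.symm
      _ ≤ (univ : Finset V).card := Finset.card_le_card this
      _ = Fintype.card V := rfl
  have hcardA : (A.card : ℝ) = (Fintype.card V : ℝ) - 2 := by
    have : A.card = Fintype.card V - 2 := by
      rw [hA, Finset.card_sdiff_of_subset (Finset.subset_univ _)]
      congr 1
      rw [Finset.card_insert_of_notMem (by simp [hp, Ne.symm (pt_ne hM k)]), Finset.card_singleton]
    rw [this]
    push_cast [Nat.cast_sub h2N]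
    ring
  obtain ⟨e, hde⟩ : ∃ e, deg G k = e + 1 := ⟨deg G k - 1, by omega⟩
  rw [hde] at hsum ⊢
  rw [hde] at hsR
  have hid := hh_succ e
  simp only [Nat.add_sub_cancel] at hsum
  rw [nsmul_eq_mul, hcardA, hsR] at hsum
  push_cast at hsum ⊢
  linarith [hid, hsum]


end Count2

section Main

lemma pmc_pos_of_adj {V : Type} [Fintype V] {G : SimpleGraph V} {M : G.Subgraph}
    (hM : M.IsPerfectMatching) (v : V) :
    1 ≤ pmc (G.induce ({v, pt hM v}ᶜ : Set V)) := by
  rw [pmc, Nat.one_le_iff_ne_zero, ← Nat.pos_iff_ne_zero]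
  have hvu : G.Adj v (pt hM v) := pt_gadj hM v
  haveI : Finite (G.induce ({v, pt hM v}ᶜ : Set V)).Subgraph := finite_subgraph _
  haveI : Nonempty {M' : (G.induce ({v, pt hM v}ᶜ : Set V)).Subgraph // M'.IsPerfectMatching} :=
    ⟨delEquiv hvu ⟨⟨M, hM⟩, pt_adj hM v⟩⟩
  exact Nat.card_pos

lemma cnt_eq_pmc {V : Type} [Fintype V] [DecidableEq V] {G : SimpleGraph V}
    [Fintype {M : G.Subgraph // M.IsPerfectMatching}]
    {v u : V} (hvu : G.Adj v u) :
    (((univ : Finset {M : G.Subgraph // M.IsPerfectMatching}).filter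
        (fun M => pt M.2 v = u)).card) = pmc (G.induce ({v, u}ᶜ : Set V)) := by
  classical
  rw [← Fintype.card_subtype, ← Nat.card_eq_fintype_card]
  have e1 : {M : {M : G.Subgraph // M.IsPerfectMatching} // pt M.2 v = u}
      ≃ {M : {M : G.Subgraph // M.IsPerfectMatching} // M.val.Adj v u} := by
    refine Equiv.subtypeEquivRight (fun M => ⟨?_, ?_⟩)
    · rintro rfl
      exact pt_adj M.2 v
    · intro h
      exact pt_eq M.2 h
  rw [Nat.card_congr e1, Nat.card_congr (delEquiv hvu)]
  rfl

lemma main : ∀ (N : ℕ) (V : Type) [Fintype V] [DecidableEq V] (G : SimpleGraph V),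
    Fintype.card V = N → 1 ≤ pmc G →
    Real.log (pmc G) ≤ (1/2) * ∑ v : V, hh (deg G v) := by
  intro N
  induction N using Nat.strong_induction_on with
  | _ N IH =>
  intro V _ _ G hcard hpm
  haveI : Finite G.Subgraph := finite_subgraph G
  letI : Fintype {M : G.Subgraph // M.IsPerfectMatching} := Fintype.ofFinite _
  have hm : pmc G = Fintype.card {M : G.Subgraph // M.IsPerfectMatching} :=
    Nat.card_eq_fintype_card
  rcases isEmpty_or_nonempty V with hV | hV
  · haveI : Subsingleton G.Subgraph :=
      ⟨fun a b => SimpleGraph.Subgraph.ext (Set.ext fun x => isEmptyElim x)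
        (funext fun x => isEmptyElim x)⟩
    have h1 : pmc G ≤ 1 := by
      rw [hm]
      exact Fintype.card_le_one_iff_subsingleton.mpr inferInstance
    have h2 : pmc G = 1 := le_antisymm h1 hpm
    rw [h2]
    simp
  · obtain ⟨M0⟩ : Nonempty {M : G.Subgraph // M.IsPerfectMatching} := by
      rw [← Fintype.card_pos_iff, ← hm]
      exact hpm
    have hdeg : ∀ v, 1 ≤ deg G v := fun v => deg_pos M0.2 v
    have hN1 : 1 ≤ N := by
      rw [← hcard]
      exact Fintype.card_pos
    set m := pmc G with hmdef
    have hmR : (0:ℝ) < (m:ℝ) := by exact_mod_cast hpm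
    have hmaps : ∀ (v : V), ∀ M ∈ (univ : Finset {M : G.Subgraph // M.IsPerfectMatching}),
        pt M.2 v ∈ (G.neighborSet v).toFinite.toFinset := by
      intro v M _
      rw [Set.Finite.mem_toFinset]
      exact pt_gadj M.2 v
    -- Step 1+2 : per vertex v
    have step12 : ∀ v : V, (m:ℝ) * Real.log (m:ℝ) ≤ (m:ℝ) * Real.log (deg G v)
        + ∑ M : {M : G.Subgraph // M.IsPerfectMatching},
            Real.log (pmc (G.induce ({v, pt M.2 v}ᶜ : Set V))) := by
      intro v
      have hfib : ∑ u ∈ (G.neighborSet v).toFinite.toFinset,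
          (((univ : Finset {M : G.Subgraph // M.IsPerfectMatching}).filter
            (fun M => pt M.2 v = u)).card) = m := by
        rw [hm, ← Finset.card_univ]
        exact (Finset.card_eq_sum_card_fiberwise (hmaps v)).symm
      have hcardnbr : ((G.neighborSet v).toFinite.toFinset).card = deg G v :=
        (Set.ncard_eq_toFinset_card _ _).symm
      have hj := jensen ((G.neighborSet v).toFinite.toFinset)
        (fun u => (((univ : Finset {M : G.Subgraph // M.IsPerfectMatching}).filter
            (fun M => pt M.2 v = u)).card))
        (by rw [hcardnbr]; exact hdeg v) (by rw [hfib]; exact hpm)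
      rw [hfib, hcardnbr] at hj
      refine hj.trans (le_of_eq ?_)
      congr 1
      have hrepl : ∀ u ∈ (G.neighborSet v).toFinite.toFinset,
          ((((univ : Finset {M : G.Subgraph // M.IsPerfectMatching}).filter
              (fun M => pt M.2 v = u)).card : ℝ)
            * Real.log ((((univ : Finset {M : G.Subgraph // M.IsPerfectMatching}).filter
              (fun M => pt M.2 v = u)).card : ℝ)))
          = ∑ M ∈ (univ : Finset {M : G.Subgraph // M.IsPerfectMatching}).filter
              (fun M => pt M.2 v = u),
              Real.log (pmc (G.induce ({v, pt M.2 v}ᶜ : Set V))) := by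
        intro u hu
        have hadj : G.Adj v u := by
          rw [Set.Finite.mem_toFinset] at hu
          exact hu
        have h2 : ∑ M ∈ (univ : Finset {M : G.Subgraph // M.IsPerfectMatching}).filter
              (fun M => pt M.2 v = u),
              Real.log (pmc (G.induce ({v, pt M.2 v}ᶜ : Set V)))
            = ∑ _M ∈ (univ : Finset {M : G.Subgraph // M.IsPerfectMatching}).filter
              (fun M => pt M.2 v = u),
              Real.log (pmc (G.induce ({v, u}ᶜ : Set V))) := by
          refine Finset.sum_congr rfl (fun M hM => ?_)
          rw [(Finset.mem_filter.mp hM).2]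
        rw [h2, Finset.sum_const, nsmul_eq_mul, cnt_eq_pmc hadj]
      rw [Finset.sum_congr rfl hrepl]
      exact Finset.sum_fiberwise_of_maps_to (hmaps v) _
    -- Step 3 : per (v, M) bound via induction hypothesis
    have step3 : ∀ (v : V) (M : {M : G.Subgraph // M.IsPerfectMatching}),
        Real.log (pmc (G.induce ({v, pt M.2 v}ᶜ : Set V)))
          ≤ (1/2) * ∑ k ∈ (univ : Finset V) \ {v, pt M.2 v},
              hh ((G.neighborSet k \ {v, pt M.2 v}).ncard) := by
      intro v M
      letI : Fintype ↥({v, pt M.2 v}ᶜ : Set V) := Fintype.ofFinite _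
      have hcards : Fintype.card ↥({v, pt M.2 v}ᶜ : Set V) = N - 2 := by
        rw [← Nat.card_eq_fintype_card, Nat.card_coe_set_eq]
        have h2 : ({v, pt M.2 v} : Set V).ncard = 2 :=
          Set.ncard_pair (Ne.symm (pt_ne M.2 v))
        have h3 := Set.ncard_add_ncard_compl ({v, pt M.2 v} : Set V)
          (Set.toFinite _) (Set.toFinite _)
        rw [h2, Nat.card_eq_fintype_card, hcard] at h3
        omega
      have hlt : N - 2 < N := by omega
      have hpm' : 1 ≤ pmc (G.induce ({v, pt M.2 v}ᶜ : Set V)) := pmc_pos_of_adj M.2 v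
      have hIH := IH (N-2) hlt ↥({v, pt M.2 v}ᶜ : Set V) (G.induce _) hcards hpm'
      refine hIH.trans (le_of_eq ?_)
      congr 1
      rw [Finset.sum_congr rfl (fun x _ => by rw [deg_del v (pt M.2 v) x]),
        Finset.sum_set_coe (f := fun k => hh ((G.neighborSet k \ {v, pt M.2 v}).ncard))]
      refine Finset.sum_congr ?_ (fun _ _ => rfl)
      ext a
      simp only [Set.mem_toFinset, Finset.mem_sdiff, Finset.mem_univ, true_and,
        Finset.mem_insert, Finset.mem_singleton, Set.mem_compl_iff, Set.mem_insert_iff,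
        Set.mem_singleton_iff, not_or]
    -- Step 4 : swap + per_k
    have step4 : ∀ M : {M : G.Subgraph // M.IsPerfectMatching},
        ∑ v : V, ∑ k ∈ (univ : Finset V) \ {v, pt M.2 v},
          hh ((G.neighborSet k \ {v, pt M.2 v}).ncard)
        ≤ ∑ k : V, ((N:ℝ) * hh (deg G k) - 2 * Real.log (deg G k)) := by
      intro M
      have hswap : ∑ v : V, ∑ k ∈ (univ : Finset V) \ {v, pt M.2 v},
            hh ((G.neighborSet k \ {v, pt M.2 v}).ncard)
          = ∑ k : V, ∑ v ∈ (univ : Finset V) \ {k, pt M.2 k},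
            hh ((G.neighborSet k \ {v, pt M.2 v}).ncard) := by
        refine Finset.sum_comm' ?_
        intro v k
        simp only [Finset.mem_univ, true_and, and_true, Finset.mem_sdiff, Finset.mem_insert,
          Finset.mem_singleton, not_or]
        constructor
        · rintro ⟨h1, h2⟩
          refine ⟨fun h => h1 h.symm, fun h => h2 ?_⟩
          rw [h, pt_pt]
        · rintro ⟨h1, h2⟩
          refine ⟨fun h => h1 h.symm, fun h => h2 ?_⟩
          rw [h, pt_pt]
      rw [hswap]
      refine Finset.sum_le_sum (fun k _ => ?_)
      have hp := per_k M.2 k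
      rw [hcard] at hp
      exact hp
    -- Assemble
    have S1 := Finset.sum_le_sum (fun v (_ : v ∈ (univ : Finset V)) => step12 v)
    rw [Finset.sum_const, Finset.card_univ, hcard, Finset.sum_add_distrib] at S1
    have S2 : ∑ v : V, ∑ M : {M : G.Subgraph // M.IsPerfectMatching},
          Real.log (pmc (G.induce ({v, pt M.2 v}ᶜ : Set V)))
        = ∑ M : {M : G.Subgraph // M.IsPerfectMatching}, ∑ v : V,
          Real.log (pmc (G.induce ({v, pt M.2 v}ᶜ : Set V))) := Finset.sum_comm
    have S3 : ∀ M : {M : G.Subgraph // M.IsPerfectMatching},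
        ∑ v : V, Real.log (pmc (G.induce ({v, pt M.2 v}ᶜ : Set V)))
          ≤ (1/2) * ∑ k : V, ((N:ℝ) * hh (deg G k) - 2 * Real.log (deg G k)) := by
      intro M
      calc ∑ v : V, Real.log (pmc (G.induce ({v, pt M.2 v}ᶜ : Set V)))
          ≤ ∑ v : V, (1/2) * ∑ k ∈ (univ : Finset V) \ {v, pt M.2 v},
              hh ((G.neighborSet k \ {v, pt M.2 v}).ncard) :=
            Finset.sum_le_sum (fun v _ => step3 v M)
        _ = (1/2) * ∑ v : V, ∑ k ∈ (univ : Finset V) \ {v, pt M.2 v},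
              hh ((G.neighborSet k \ {v, pt M.2 v}).ncard) := by
            rw [Finset.mul_sum]
        _ ≤ (1/2) * ∑ k : V, ((N:ℝ) * hh (deg G k) - 2 * Real.log (deg G k)) := by
            have := step4 M
            linarith
    have S4 : ∑ M : {M : G.Subgraph // M.IsPerfectMatching}, ∑ v : V,
          Real.log (pmc (G.induce ({v, pt M.2 v}ᶜ : Set V)))
        ≤ (m:ℝ) * ((1/2) * ∑ k : V, ((N:ℝ) * hh (deg G k) - 2 * Real.log (deg G k))) := by
      calc _ ≤ ∑ _M : {M : G.Subgraph // M.IsPerfectMatching},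
            ((1/2) * ∑ k : V, ((N:ℝ) * hh (deg G k) - 2 * Real.log (deg G k))) :=
          Finset.sum_le_sum (fun M _ => S3 M)
        _ = (m:ℝ) * ((1/2) * ∑ k : V, ((N:ℝ) * hh (deg G k) - 2 * Real.log (deg G k))) := by
          rw [Finset.sum_const, Finset.card_univ, ← hm, nsmul_eq_mul]
    have E1 : ∑ k : V, ((N:ℝ) * hh (deg G k) - 2 * Real.log (deg G k))
        = (N:ℝ) * (∑ k : V, hh (deg G k)) - 2 * ∑ k : V, Real.log (deg G k) := by
      rw [Finset.sum_sub_distrib, Finset.mul_sum, Finset.mul_sum]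
    have E2 : ∑ v : V, (m:ℝ) * Real.log (deg G v) = (m:ℝ) * ∑ v : V, Real.log (deg G v) := by
      rw [Finset.mul_sum]
    have KEY : (N:ℝ) * ((m:ℝ) * Real.log (m:ℝ))
        ≤ ((N:ℝ) * (m:ℝ)) * ((1/2) * ∑ v : V, hh (deg G v)) := by
      rw [S2] at S1
      rw [E1] at S4
      rw [E2] at S1
      have := S1.trans (by linarith [S4] : (m:ℝ) * ∑ v : V, Real.log (deg G v)
        + ∑ M : {M : G.Subgraph // M.IsPerfectMatching}, ∑ v : V,
          Real.log (pmc (G.induce ({v, pt M.2 v}ᶜ : Set V)))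
        ≤ ((N:ℝ) * (m:ℝ)) * ((1/2) * ∑ v : V, hh (deg G v)))
      simpa [nsmul_eq_mul] using this
    have hNpos : (0:ℝ) < (N:ℝ) := by exact_mod_cast hN1
    have hNm : (0:ℝ) < (N:ℝ) * (m:ℝ) := by positivity
    have KEY2 : ((N:ℝ) * (m:ℝ)) * Real.log (m:ℝ)
        ≤ ((N:ℝ) * (m:ℝ)) * ((1/2) * ∑ v : V, hh (deg G v)) := by
      calc ((N:ℝ) * (m:ℝ)) * Real.log (m:ℝ) = (N:ℝ) * ((m:ℝ) * Real.log (m:ℝ)) := by ring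
        _ ≤ _ := KEY
    exact le_of_mul_le_mul_left KEY2 hNm

end Main

end KL

open Finset

/-- Kahn–Lovász theorem: a graph on `2n` vertices with degrees `dᵢ ≥ 1` has at most
`Π (dᵢ!)^{1/(2dᵢ)}` perfect matchings. -/
theorem kahn_lovasz (n : ℕ) (G : SimpleGraph (Fin (2 * n))) [DecidableRel G.Adj]
    (hd : ∀ i, 1 ≤ G.degree i) :
    (Nat.card {M : G.Subgraph // M.IsPerfectMatching} : ℝ) ≤
      ∏ i, (Nat.factorial (G.degree i) : ℝ) ^ (1 / (2 * (G.degree i) : ℝ)) := by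
  have hdeg : ∀ i, G.degree i = KL.deg G i := by
    intro i
    rw [KL.deg, Set.ncard_eq_toFinset_card']
    simp [SimpleGraph.degree, SimpleGraph.neighborFinset]
  have hRHS : ∏ i, (Nat.factorial (G.degree i) : ℝ) ^ (1 / (2 * (G.degree i) : ℝ))
      = Real.exp ((1/2) * ∑ i, KL.hh (KL.deg G i)) := by
    rw [Finset.mul_sum, Real.exp_sum]
    refine Finset.prod_congr rfl (fun i _ => ?_)
    have hpos : (0:ℝ) < (Nat.factorial (G.degree i) : ℝ) := by
      exact_mod_cast Nat.factorial_pos _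
    rw [Real.rpow_def_of_pos hpos, KL.hh, ← hdeg i]
    congr 1
    have hdi : (0:ℝ) < (G.degree i : ℝ) := by exact_mod_cast hd i
    field_simp
  rw [hRHS]
  rcases Nat.eq_zero_or_pos (KL.pmc G) with h0 | hpos
  · rw [KL.pmc] at h0
    rw [h0]
    simpa using (Real.exp_pos ((1/2) * ∑ i, KL.hh (KL.deg G i))).le
  · have hmain := KL.main (Fintype.card (Fin (2*n))) (Fin (2*n)) G rfl hpos
    have : (KL.pmc G : ℝ) ≤ Real.exp ((1/2) * ∑ i, KL.hh (KL.deg G i)) := by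
      rw [← Real.exp_log (by exact_mod_cast hpos : (0:ℝ) < (KL.pmc G : ℝ))]
      exact Real.exp_le_exp.mpr hmain
    exact this
end

section
/- For d ≥ 2, n ≥ d+1, and q ≥ 2, if G is any n-vertex d-regular bipartite graph, then the number of proper q-colorings satisfies c_q(G) ≤ c_q(K_{d,d})^{n/(2d)}, i.e., c_q(G)^{2d} ≤ c_q(K_{d,d})ⁿ. -/
open Finset

namespace GT
noncomputable section

/-- Log-sum inequality. -/
lemma logsum {ι : Type*} (s : Finset ι) (a b : ι → ℝ)
    (ha : ∀ i ∈ s, 0 < a i) (hb : ∀ i ∈ s, 0 < b i) :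
    ∑ i ∈ s, a i * (Real.log (b i) - Real.log (a i)) ≤
      (∑ i ∈ s, a i) * (Real.log (∑ i ∈ s, b i) - Real.log (∑ i ∈ s, a i)) := by
  rcases s.eq_empty_or_nonempty with rfl | hs
  · simp
  · set A := ∑ i ∈ s, a i with hA
    set B := ∑ i ∈ s, b i with hB
    have hApos : 0 < A := Finset.sum_pos ha hs
    have hBpos : 0 < B := Finset.sum_pos hb hs
    have key : ∀ i ∈ s, a i * (Real.log (b i) - Real.log (a i)) ≤
        a i * (Real.log B - Real.log A) + (A / B * b i - a i) := by
      intro i hi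
      have hai := ha i hi
      have hbi := hb i hi
      have hai' : a i ≠ 0 := ne_of_gt hai
      have hbB : (B:ℝ) ≠ 0 := ne_of_gt hBpos
      have h1 : Real.log (b i) - Real.log (a i) - (Real.log B - Real.log A)
          = Real.log ((b i * A) / (a i * B)) := by
        rw [Real.log_div (by positivity) (by positivity),
          Real.log_mul (ne_of_gt hbi) (ne_of_gt hApos),
          Real.log_mul (ne_of_gt hai) (ne_of_gt hBpos)]
        ring
      have h2 : Real.log ((b i * A) / (a i * B)) ≤ (b i * A) / (a i * B) - 1 :=
        Real.log_le_sub_one_of_pos (by positivity)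
      have h3 : a i * (Real.log (b i) - Real.log (a i) - (Real.log B - Real.log A))
          ≤ a i * ((b i * A) / (a i * B) - 1) := by
        rw [h1]; exact mul_le_mul_of_nonneg_left h2 (le_of_lt hai)
      have h4 : a i * ((b i * A) / (a i * B) - 1) = A / B * b i - a i := by
        field_simp
      linarith [h3, h4.symm.le, h4.le]
    calc ∑ i ∈ s, a i * (Real.log (b i) - Real.log (a i))
        ≤ ∑ i ∈ s, (a i * (Real.log B - Real.log A) + (A / B * b i - a i)) :=
          Finset.sum_le_sum key
      _ = A * (Real.log B - Real.log A) + (A / B * B - A) := by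
          rw [Finset.sum_add_distrib, ← Finset.sum_mul, Finset.sum_sub_distrib,
            ← Finset.mul_sum]
      _ = A * (Real.log B - Real.log A) := by field_simp; ring

variable {V K : Type*} [Fintype V] [DecidableEq V] [DecidableEq K]
set_option linter.unusedSectionVars false

/-- Restriction of a function to a finite set, as a partial function. -/
def r (S : Finset V) (f : V → K) : V → Option K := fun x => if x ∈ S then some (f x) else none

/-- Restriction of a partial function. -/
def ρ (S : Finset V) (φ : V → Option K) : V → Option K := fun x => if x ∈ S then φ x else none

lemma ρ_r {S T : Finset V} (h : S ⊆ T) (f : V → K) : ρ S (r T f) = r S f := by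
  funext x
  by_cases hx : x ∈ S
  · simp [ρ, r, hx, h hx]
  · simp [ρ, r, hx]

variable (C : Finset (V → K))

/-- The number of elements of `C` whose restriction to `S` is `φ`. -/
def Nc (S : Finset V) (φ : V → Option K) : ℕ := (C.filter (fun g => r S g = φ)).card

/-- `C.card` times the entropy of the restriction to `S` of a uniform random element of `C`. -/
def Ent (S : Finset V) : ℝ :=
  ∑ f ∈ C, (Real.log C.card - Real.log (Nc C S (r S f)))

lemma mem_fiber_self {f : V → K} (hf : f ∈ C) (S : Finset V) :
    f ∈ C.filter (fun g => r S g = r S f) := by simp [hf]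

lemma Nc_pos {f : V → K} (hf : f ∈ C) (S : Finset V) : 0 < Nc C S (r S f) :=
  Finset.card_pos.2 ⟨f, mem_fiber_self C hf S⟩

lemma fiber_subset {S T : Finset V} (h : S ⊆ T) (f : V → K) :
    C.filter (fun g => r T g = r T f) ⊆ C.filter (fun g => r S g = r S f) := by
  intro g hg
  rw [Finset.mem_filter] at hg ⊢
  exact ⟨hg.1, by rw [← ρ_r h, hg.2, ρ_r h]⟩

lemma Nc_mono {S T : Finset V} (h : S ⊆ T) (f : V → K) :
    Nc C T (r T f) ≤ Nc C S (r S f) := Finset.card_le_card (fiber_subset C h f)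

lemma Nc_le_card (S : Finset V) (φ : V → Option K) : Nc C S φ ≤ C.card :=
  Finset.card_le_card (Finset.filter_subset _ _)

lemma Ent_empty : Ent C ∅ = 0 := by
  unfold Ent Nc
  have : ∀ f ∈ C, Real.log C.card - Real.log ((C.filter (fun g => r ∅ g = r ∅ f)).card) = 0 := by
    intro f hf
    have : C.filter (fun g => r ∅ g = r ∅ f) = C := by
      apply Finset.filter_true_of_mem
      intro g hg
      funext x
      simp [r]
    rw [this, sub_self]
  rw [Finset.sum_congr rfl this, Finset.sum_const, smul_zero]

lemma Ent_mono {S T : Finset V} (h : S ⊆ T) : Ent C S ≤ Ent C T := by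
  apply Finset.sum_le_sum
  intro f hf
  have h1 : 0 < Nc C T (r T f) := Nc_pos C hf T
  have h2 : Nc C T (r T f) ≤ Nc C S (r S f) := Nc_mono C h f
  have := Real.log_le_log (show (0:ℝ) < Nc C T (r T f) by exact_mod_cast h1)
    (show (Nc C T (r T f) : ℝ) ≤ Nc C S (r S f) by exact_mod_cast h2)
  linarith

lemma Ent_nonneg (S : Finset V) : 0 ≤ Ent C S := Ent_empty C ▸ Ent_mono C (Finset.empty_subset S)

lemma Ent_univ : Ent C Finset.univ = C.card * Real.log C.card := by
  unfold Ent Nc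
  have : ∀ f ∈ C, Real.log C.card -
      Real.log ((C.filter (fun g => r Finset.univ g = r Finset.univ f)).card)
      = Real.log C.card := by
    intro f hf
    have : C.filter (fun g => r Finset.univ g = r Finset.univ f) = {f} := by
      apply Finset.eq_singleton_iff_unique_mem.2
      refine ⟨mem_fiber_self C hf _, ?_⟩
      intro g hg
      rw [Finset.mem_filter] at hg
      funext x
      have := congrFun hg.2 x
      simpa [r] using this
    rw [this]
    simp
  rw [Finset.sum_congr rfl this, Finset.sum_const, nsmul_eq_mul]

lemma ρ_ρ {I S : Finset V} (h : I ⊆ S) (φ : V → Option K) : ρ I (ρ S φ) = ρ I φ := by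
  funext x
  by_cases hx : x ∈ I
  · simp [ρ, hx, h hx]
  · simp [ρ, hx]

lemma sum_Nc (S : Finset V) (X : Finset (V → Option K)) :
    ∑ α ∈ X, Nc C S α = (C.filter (fun g => r S g ∈ X)).card := by
  have : C.filter (fun g => r S g ∈ X) = X.biUnion (fun α => C.filter (fun g => r S g = α)) := by
    ext g
    simp only [Finset.mem_filter, Finset.mem_biUnion]
    constructor
    · rintro ⟨hg, hx⟩; exact ⟨r S g, hx, hg, rfl⟩
    · rintro ⟨α, hα, hg, hr⟩; exact ⟨hg, hr ▸ hα⟩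
  rw [this, Finset.card_biUnion]
  · rfl
  · intro α hα β hβ hne
    apply Finset.disjoint_left.2
    intro g hg hg'
    rw [Finset.mem_filter] at hg hg'
    exact hne (hg.2 ▸ hg'.2 ▸ rfl)

lemma submod (S T : Finset V) :
    Ent C (S ∪ T) + Ent C (S ∩ T) ≤ Ent C S + Ent C T := by
  rcases C.eq_empty_or_nonempty with rfl | hC
  · simp [Ent]
  set U := S ∪ T with hU
  set I := S ∩ T with hI
  have hSU : S ⊆ U := Finset.subset_union_left
  have hTU : T ⊆ U := Finset.subset_union_right
  have hIS : I ⊆ S := Finset.inter_subset_left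
  have hIT : I ⊆ T := Finset.inter_subset_right
  have hIU : I ⊆ U := hIS.trans hSU
  set c : ℕ := C.card with hc
  have hcpos : 0 < c := Finset.card_pos.2 hC
  -- the summand as a function of the restriction to U
  set u : (V → Option K) → ℝ := fun φ =>
    Real.log (Nc C S (ρ S φ)) + Real.log (Nc C T (ρ T φ))
      - Real.log (Nc C U φ) - Real.log (Nc C I (ρ I φ)) with hu
  set L : ℝ := ∑ f ∈ C, u (r U f) with hL
  set Im : Finset (V → Option K) := C.image (r U) with hIm
  -- positivity of the pieces for φ in the image
  have hmem : ∀ φ ∈ Im, ∀ J : Finset V, J ⊆ U → 0 < Nc C J (ρ J φ) := by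
    intro φ hφ J hJ
    obtain ⟨f, hf, rfl⟩ := Finset.mem_image.1 hφ
    rw [ρ_r hJ]
    exact Nc_pos C hf J
  -- rewrite L as a sum over the image
  have hL2 : L = ∑ φ ∈ Im, (Nc C U φ : ℝ) * u φ := by
    rw [hL, Finset.sum_comp u (r U)]
    apply Finset.sum_congr rfl
    intro φ hφ
    rw [nsmul_eq_mul]
    rfl
  -- the auxiliary weights
  set b : (V → Option K) → ℝ := fun φ =>
    (Nc C S (ρ S φ) : ℝ) * (Nc C T (ρ T φ)) / (Nc C I (ρ I φ)) with hb
  have hbpos : ∀ φ ∈ Im, 0 < b φ := by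
    intro φ hφ
    have h1 := hmem φ hφ S hSU
    have h2 := hmem φ hφ T hTU
    have h3 := hmem φ hφ I hIU
    have h1' : (0:ℝ) < Nc C S (ρ S φ) := by exact_mod_cast h1
    have h2' : (0:ℝ) < Nc C T (ρ T φ) := by exact_mod_cast h2
    have h3' : (0:ℝ) < Nc C I (ρ I φ) := by exact_mod_cast h3
    positivity
  have hapos : ∀ φ ∈ Im, 0 < (Nc C U φ : ℝ) := by
    intro φ hφ
    obtain ⟨f, hf, rfl⟩ := Finset.mem_image.1 hφ
    have := Nc_pos C hf U
    exact_mod_cast this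
  -- key: per-φ, the summand is a * (log b - log a)
  have hterm : ∀ φ ∈ Im, (Nc C U φ : ℝ) * u φ
      = (Nc C U φ : ℝ) * (Real.log (b φ) - Real.log ((Nc C U φ : ℝ))) := by
    intro φ hφ
    have h1 := hmem φ hφ S hSU
    have h2 := hmem φ hφ T hTU
    have h3 := hmem φ hφ I hIU
    congr 1
    rw [hb]
    rw [Real.log_div (by positivity) (by exact_mod_cast h3.ne'),
      Real.log_mul (by exact_mod_cast h1.ne') (by exact_mod_cast h2.ne')]
    rw [hu]
    ring
  -- total mass of a is c
  have hsuma : ∑ φ ∈ Im, (Nc C U φ : ℝ) = c := by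
    have := sum_Nc C U Im
    have h2 : C.filter (fun g => r U g ∈ Im) = C := by
      apply Finset.filter_true_of_mem
      intro g hg
      exact Finset.mem_image_of_mem _ hg
    rw [h2] at this
    exact_mod_cast congrArg (Nat.cast : ℕ → ℝ) this
  -- total mass of b is at most c
  have hsumb : ∑ φ ∈ Im, b φ ≤ c := by
    set Ψ : Finset (V → Option K) := Im.image (ρ I) with hΨdef
    have hfib : ∑ φ ∈ Im, b φ
        = ∑ ψ ∈ Ψ, ∑ φ ∈ Im.filter (fun φ => ρ I φ = ψ), b φ :=
      (Finset.sum_fiberwise_of_maps_to (fun φ hφ => Finset.mem_image_of_mem _ hφ) b).symm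
    have hΨ : Ψ = C.image (r I) := by
      rw [hΨdef, hIm, Finset.image_image]
      apply Finset.image_congr
      intro f _
      exact ρ_r hIU f
    have hinner : ∀ ψ ∈ Ψ, ∑ φ ∈ Im.filter (fun φ => ρ I φ = ψ), b φ ≤ (Nc C I ψ : ℝ) := by
      intro ψ hψ
      have hψpos : 0 < Nc C I ψ := by
        rw [hΨ] at hψ
        obtain ⟨f, hf, rfl⟩ := Finset.mem_image.1 hψ
        exact Nc_pos C hf I
      have hψpos' : (0:ℝ) < (Nc C I ψ : ℝ) := by exact_mod_cast hψpos
      set P : Finset (V → Option K) := Im.filter (fun φ => ρ I φ = ψ) with hP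
      have hb' : ∀ φ ∈ P, b φ = (Nc C S (ρ S φ) : ℝ) * (Nc C T (ρ T φ)) / (Nc C I ψ) := by
        intro φ hφ
        simp only [hb, (Finset.mem_filter.1 hφ).2]
      have hside : ∀ (J : Finset V), J ⊆ U → I ⊆ J →
          ∑ α ∈ P.image (ρ J), (Nc C J α : ℝ) ≤ (Nc C I ψ : ℝ) := by
        intro J hJU hIJ
        have : ∑ α ∈ P.image (ρ J), Nc C J α ≤ Nc C I ψ := by
          rw [sum_Nc C J (P.image (ρ J))]
          apply Finset.card_le_card
          intro g hg
          rw [Finset.mem_filter] at hg ⊢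
          refine ⟨hg.1, ?_⟩
          obtain ⟨φ, hφ, hφ2⟩ := Finset.mem_image.1 hg.2
          have : r I g = ρ I (ρ J (r J g)) := by rw [ρ_ρ hIJ, ρ_r hIJ]
          rw [this, ← hφ2, ρ_ρ hIJ, ρ_ρ hIJ, (Finset.mem_filter.1 hφ).2]
        calc ∑ α ∈ P.image (ρ J), (Nc C J α : ℝ)
            = ((∑ α ∈ P.image (ρ J), Nc C J α : ℕ) : ℝ) := by push_cast; ring
          _ ≤ (Nc C I ψ : ℝ) := by exact_mod_cast this
      have hinj : ∀ φ ∈ P, ∀ φ' ∈ P, (fun φ => (ρ S φ, ρ T φ)) φ = (fun φ => (ρ S φ, ρ T φ)) φ' → φ = φ' := by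
        intro φ hφ φ' hφ' heq
        obtain ⟨f, hf, rfl⟩ := Finset.mem_image.1 (Finset.mem_filter.1 hφ).1
        obtain ⟨f', hf', rfl⟩ := Finset.mem_image.1 (Finset.mem_filter.1 hφ').1
        have h1 : ρ S (r U f) = ρ S (r U f') := (Prod.ext_iff.1 heq).1
        have h2 : ρ T (r U f) = ρ T (r U f') := (Prod.ext_iff.1 heq).2
        funext x
        by_cases hxS : x ∈ S
        · have := congrFun h1 x
          simpa [ρ, hxS] using this
        by_cases hxT : x ∈ T
        · have := congrFun h2 x
          simpa [ρ, hxT] using this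
        · have hxU : x ∉ U := by rw [hU]; simp [hxS, hxT]
          simp [r, hxU]
      have hpair : ∑ φ ∈ P, ((Nc C S (ρ S φ) : ℝ) * (Nc C T (ρ T φ)))
          ≤ (Nc C I ψ : ℝ) * (Nc C I ψ) := by
        have e1 : ∑ p ∈ P.image (fun φ => (ρ S φ, ρ T φ)), ((Nc C S p.1 : ℝ) * (Nc C T p.2))
            = ∑ φ ∈ P, ((Nc C S (ρ S φ) : ℝ) * (Nc C T (ρ T φ))) :=
          Finset.sum_image hinj
        rw [← e1]
        have hsub : P.image (fun φ => (ρ S φ, ρ T φ)) ⊆ (P.image (ρ S)) ×ˢ (P.image (ρ T)) := by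
          intro p hp
          obtain ⟨φ, hφ, rfl⟩ := Finset.mem_image.1 hp
          exact Finset.mem_product.2 ⟨Finset.mem_image_of_mem _ hφ, Finset.mem_image_of_mem _ hφ⟩
        calc ∑ p ∈ P.image (fun φ => (ρ S φ, ρ T φ)), ((Nc C S p.1 : ℝ) * (Nc C T p.2))
            ≤ ∑ p ∈ (P.image (ρ S)) ×ˢ (P.image (ρ T)), ((Nc C S p.1 : ℝ) * (Nc C T p.2)) := by
              apply Finset.sum_le_sum_of_subset_of_nonneg hsub
              intro p _ _
              positivity
          _ = (∑ α ∈ P.image (ρ S), (Nc C S α : ℝ)) * (∑ β ∈ P.image (ρ T), (Nc C T β : ℝ)) := by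
              rw [Finset.sum_product' _ _ (fun α β => (Nc C S α : ℝ) * (Nc C T β : ℝ))]
              rw [← Finset.sum_mul_sum]
          _ ≤ (Nc C I ψ : ℝ) * (Nc C I ψ) := by
              apply mul_le_mul (hside S hSU hIS) (hside T hTU hIT)
                (Finset.sum_nonneg (fun β _ => by positivity)) (le_of_lt hψpos')
      rw [Finset.sum_congr rfl hb', ← Finset.sum_div, div_le_iff₀ hψpos']
      exact hpair
    calc ∑ φ ∈ Im, b φ = ∑ ψ ∈ Ψ, ∑ φ ∈ Im.filter (fun φ => ρ I φ = ψ), b φ := hfib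
      _ ≤ ∑ ψ ∈ Ψ, (Nc C I ψ : ℝ) := Finset.sum_le_sum hinner
      _ = c := by
          rw [hΨ]
          have := sum_Nc C I (C.image (r I))
          have h2 : C.filter (fun g => r I g ∈ C.image (r I)) = C :=
            Finset.filter_true_of_mem (fun g hg => Finset.mem_image_of_mem _ hg)
          rw [h2] at this
          rw [← Nat.cast_sum, this, hc]
  have hsumbpos : 0 < ∑ φ ∈ Im, b φ := by
    apply Finset.sum_pos hbpos
    exact hC.image _
  -- apply log-sum
  have := logsum Im (fun φ => (Nc C U φ : ℝ)) b hapos hbpos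
  have hLle : L ≤ 0 := by
    rw [hL2, Finset.sum_congr rfl hterm]
    have hlog : Real.log (∑ φ ∈ Im, b φ) ≤ Real.log c := Real.log_le_log hsumbpos hsumb
    calc ∑ φ ∈ Im, (Nc C U φ : ℝ) * (Real.log (b φ) - Real.log ((Nc C U φ : ℝ)))
        ≤ (∑ φ ∈ Im, (Nc C U φ : ℝ)) *
            (Real.log (∑ φ ∈ Im, b φ) - Real.log (∑ φ ∈ Im, (Nc C U φ : ℝ))) := this
      _ ≤ 0 := by
          rw [hsuma]
          have : Real.log (∑ φ ∈ Im, b φ) - Real.log (c : ℝ) ≤ 0 := by linarith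
          exact mul_nonpos_of_nonneg_of_nonpos (by positivity) this
  -- conclude
  have hE : Ent C S + Ent C T - (Ent C U + Ent C I) = -L := by
    rw [hL]
    simp only [Ent, hu, ← Finset.sum_add_distrib, ← Finset.sum_sub_distrib, ← Finset.sum_neg_distrib]
    apply Finset.sum_congr rfl
    intro f hf
    rw [ρ_r hSU, ρ_r hTU, ρ_r hIU]
    ring
  linarith

lemma fiber_filter {S W : Finset V} (hSW : S ⊆ W) {ψ φ : V → Option K}
    (hφ : φ ∈ (C.filter (fun g => r S g = ψ)).image (r W)) :
    (C.filter (fun g => r S g = ψ)).filter (fun g => r W g = φ)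
      = C.filter (fun g => r W g = φ) := by
  obtain ⟨f, hf, rfl⟩ := Finset.mem_image.1 hφ
  rw [Finset.mem_filter] at hf
  ext g
  constructor
  · intro h
    rw [Finset.mem_filter] at h ⊢
    exact ⟨(Finset.mem_filter.1 h.1).1, h.2⟩
  · intro h
    rw [Finset.mem_filter] at h ⊢
    refine ⟨Finset.mem_filter.2 ⟨h.1, ?_⟩, h.2⟩
    rw [← ρ_r hSW g, h.2, ρ_r hSW, hf.2]

lemma local_bound (S : Finset V) (v : V) (d cK : ℕ) (hd : 1 ≤ d)
    (htd : ∑ ψ ∈ C.image (r S),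
        ((C.filter (fun g => r S g = ψ)).image (r (insert v S))).card ^ d ≤ cK) :
    (d : ℝ) * Ent C (insert v S) - ((d : ℝ) - 1) * Ent C S ≤ C.card * Real.log cK := by
  rcases C.eq_empty_or_nonempty with rfl | hC
  · simp [Ent]
  set W : Finset V := insert v S with hW
  have hSW : S ⊆ W := Finset.subset_insert v S
  set c : ℕ := C.card with hc
  have hcpos : 0 < c := Finset.card_pos.2 hC
  have hcpos' : (0:ℝ) < c := by exact_mod_cast hcpos
  have hd' : (0:ℝ) < d := by exact_mod_cast hd
  set ImS : Finset (V → Option K) := C.image (r S) with hImS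
  have hImSne : ImS.Nonempty := hC.image _
  set Tt : (V → Option K) → ℕ := fun ψ => ((C.filter (fun g => r S g = ψ)).image (r W)).card
    with hTt
  have hTpos : ∀ ψ ∈ ImS, 0 < Tt ψ := by
    intro ψ hψ
    obtain ⟨f, hf, rfl⟩ := Finset.mem_image.1 hψ
    exact Finset.card_pos.2 ((Finset.card_pos.1 (Nc_pos C hf S)).image _)
  have hmpos : ∀ ψ ∈ ImS, 0 < Nc C S ψ := by
    intro ψ hψ
    obtain ⟨f, hf, rfl⟩ := Finset.mem_image.1 hψ
    exact Nc_pos C hf S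
  -- sum of fiber sizes over the W-image of an S-fiber
  have hsumk : ∀ ψ ∈ ImS,
      ∑ φ ∈ (C.filter (fun g => r S g = ψ)).image (r W), Nc C W φ = Nc C S ψ := by
    intro ψ hψ
    have hset : C.filter (fun g => r W g ∈ (C.filter (fun g => r S g = ψ)).image (r W))
        = C.filter (fun g => r S g = ψ) := by
      ext g
      simp only [Finset.mem_filter]
      constructor
      · rintro ⟨hg, hmem⟩
        obtain ⟨f, hf, hfe⟩ := Finset.mem_image.1 hmem
        rw [Finset.mem_filter] at hf
        refine ⟨hg, ?_⟩
        rw [← ρ_r hSW g, ← hfe, ρ_r hSW, hf.2]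
      · rintro ⟨hg, hre⟩
        exact ⟨hg, Finset.mem_image_of_mem _ (Finset.mem_filter.2 ⟨hg, hre⟩)⟩
    rw [sum_Nc C W, hset]
    rfl
  -- inner bound, per fiber
  have hinner : ∀ ψ ∈ ImS,
      ∑ f ∈ C.filter (fun g => r S g = ψ),
          (Real.log c + ((d:ℝ) - 1) * Real.log (Nc C S (r S f))
            - (d:ℝ) * Real.log (Nc C W (r W f)))
        ≤ (Nc C S ψ : ℝ) * (Real.log c - Real.log (Nc C S ψ))
            + (d:ℝ) * (Nc C S ψ) * Real.log (Tt ψ) := by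
    intro ψ hψ
    set m : ℕ := Nc C S ψ with hm
    have hm0 : 0 < m := hmpos ψ hψ
    have hm0' : (0:ℝ) < m := by exact_mod_cast hm0
    set T : ℕ := Tt ψ with hT
    have hT0 : 0 < T := hTpos ψ hψ
    have hT0' : (0:ℝ) < T := by exact_mod_cast hT0
    set y : ℝ := Real.exp ((Real.log c + ((d:ℝ) - 1) * Real.log m) / d) with hy
    have hy0 : 0 < y := Real.exp_pos _
    have hdy : (d:ℝ) * Real.log y = Real.log c + ((d:ℝ) - 1) * Real.log m := by
      rw [hy, Real.log_exp]
      field_simp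
    set Fib : Finset (V → K) := C.filter (fun g => r S g = ψ) with hFib
    set imW : Finset (V → Option K) := Fib.image (r W) with himW
    have step1 : ∑ f ∈ Fib,
        (Real.log c + ((d:ℝ) - 1) * Real.log (Nc C S (r S f))
          - (d:ℝ) * Real.log (Nc C W (r W f)))
        = ∑ φ ∈ imW, (Nc C W φ : ℝ) * ((d:ℝ) * (Real.log y - Real.log (Nc C W φ))) := by
      have e0 : ∀ f ∈ Fib,
          (Real.log c + ((d:ℝ) - 1) * Real.log (Nc C S (r S f))
            - (d:ℝ) * Real.log (Nc C W (r W f)))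
          = (fun φ => (d:ℝ) * (Real.log y - Real.log (Nc C W φ))) (r W f) := by
        intro f hf
        have : r S f = ψ := (Finset.mem_filter.1 hf).2
        rw [this]
        simp only
        rw [mul_sub, hdy]
      rw [Finset.sum_congr rfl e0,
        Finset.sum_comp (fun φ => (d:ℝ) * (Real.log y - Real.log ((Nc C W φ : ℕ) : ℝ))) (r W)]
      apply Finset.sum_congr rfl
      intro φ hφ
      rw [nsmul_eq_mul]
      rw [hFib] at hφ ⊢
      rw [fiber_filter C hSW hφ]
      rw [show ((C.filter (fun g => r W g = φ)).card : ℝ) = ((Nc C W φ : ℕ) : ℝ) from rfl]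
    have hkpos : ∀ φ ∈ imW, (0:ℝ) < (Nc C W φ : ℝ) := by
      intro φ hφ
      obtain ⟨f, hf, rfl⟩ := Finset.mem_image.1 hφ
      have := Nc_pos C (Finset.mem_filter.1 hf).1 W
      exact_mod_cast this
    have hls := logsum imW (fun φ => (Nc C W φ : ℝ)) (fun _ => y) hkpos (fun _ _ => hy0)
    have hsk : ∑ φ ∈ imW, (Nc C W φ : ℝ) = m := by
      rw [← Nat.cast_sum]
      exact_mod_cast congrArg (Nat.cast : ℕ → ℝ) (hsumk ψ hψ)
    have hsy : ∑ _φ ∈ imW, y = T * y := by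
      rw [Finset.sum_const, nsmul_eq_mul, hT, hTt]
    rw [step1]
    have e1 : ∑ φ ∈ imW, (Nc C W φ : ℝ) * ((d:ℝ) * (Real.log y - Real.log (Nc C W φ)))
        = (d:ℝ) * ∑ φ ∈ imW, (Nc C W φ : ℝ) * (Real.log y - Real.log (Nc C W φ)) := by
      rw [Finset.mul_sum]
      apply Finset.sum_congr rfl
      intro φ _
      ring
    rw [e1]
    have hls2 : ∑ φ ∈ imW, (Nc C W φ : ℝ) * (Real.log y - Real.log (Nc C W φ))
        ≤ (m:ℝ) * (Real.log (T * y) - Real.log m) := by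
      have := hls
      rw [hsk, hsy] at this
      exact this
    have efin : (d:ℝ) * ((m:ℝ) * (Real.log (T * y) - Real.log m))
        = (m : ℝ) * (Real.log c - Real.log m) + (d:ℝ) * m * Real.log T := by
      rw [Real.log_mul (ne_of_gt hT0') (ne_of_gt hy0)]
      linear_combination (m:ℝ) * hdy
    calc (d:ℝ) * ∑ φ ∈ imW, (Nc C W φ : ℝ) * (Real.log y - Real.log (Nc C W φ))
        ≤ (d:ℝ) * ((m:ℝ) * (Real.log (T * y) - Real.log m)) := by
          apply mul_le_mul_of_nonneg_left hls2 (le_of_lt hd')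
      _ = (m : ℝ) * (Real.log c - Real.log m) + (d:ℝ) * m * Real.log T := efin
  -- outer bound
  have houter : ∑ ψ ∈ ImS, ((Nc C S ψ : ℝ) * (Real.log c - Real.log (Nc C S ψ))
      + (d:ℝ) * (Nc C S ψ) * Real.log (Tt ψ)) ≤ c * Real.log cK := by
    have hbb : ∀ ψ ∈ ImS, (Nc C S ψ : ℝ) * (Real.log c - Real.log (Nc C S ψ))
        + (d:ℝ) * (Nc C S ψ) * Real.log (Tt ψ)
        = (Nc C S ψ : ℝ) * (Real.log ((c : ℝ) * (Tt ψ : ℝ)^d) - Real.log (Nc C S ψ)) := by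
      intro ψ hψ
      have h1 := hTpos ψ hψ
      have h1' : (0:ℝ) < (Tt ψ : ℝ) := by exact_mod_cast h1
      rw [Real.log_mul (ne_of_gt hcpos') (by positivity), Real.log_pow]
      ring
    rw [Finset.sum_congr rfl hbb]
    have hapos : ∀ ψ ∈ ImS, (0:ℝ) < (Nc C S ψ : ℝ) := by
      intro ψ hψ; exact_mod_cast hmpos ψ hψ
    have hbpos : ∀ ψ ∈ ImS, (0:ℝ) < (c : ℝ) * (Tt ψ : ℝ)^d := by
      intro ψ hψ
      have h1' : (0:ℝ) < (Tt ψ : ℝ) := by exact_mod_cast hTpos ψ hψ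
      positivity
    have hls := logsum ImS (fun ψ => (Nc C S ψ : ℝ)) (fun ψ => (c : ℝ) * (Tt ψ : ℝ)^d)
      hapos hbpos
    have hsm : ∑ ψ ∈ ImS, (Nc C S ψ : ℝ) = c := by
      rw [← Nat.cast_sum]
      have := sum_Nc C S ImS
      have h2 : C.filter (fun g => r S g ∈ ImS) = C :=
        Finset.filter_true_of_mem (fun g hg => Finset.mem_image_of_mem _ hg)
      rw [h2] at this
      rw [this, hc]
    set Td : ℕ := ∑ ψ ∈ ImS, (Tt ψ) ^ d with hTd
    have hTd1 : 1 ≤ Td := by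
      obtain ⟨ψ0, hψ0⟩ := hImSne
      calc 1 ≤ (Tt ψ0) ^ d := Nat.one_le_pow _ _ (hTpos ψ0 hψ0)
        _ ≤ Td := by
            rw [hTd]
            exact Finset.single_le_sum (f := fun ψ => (Tt ψ) ^ d) (fun ψ _ => Nat.zero_le _) hψ0
    have hTd1' : (1:ℝ) ≤ (Td : ℝ) := by exact_mod_cast hTd1
    have hsb : ∑ ψ ∈ ImS, (c : ℝ) * (Tt ψ : ℝ)^d = (c : ℝ) * Td := by
      rw [← Finset.mul_sum, hTd]
      push_cast
      ring
    rw [hsm, hsb] at hls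
    have hcKle : Real.log ((c:ℝ) * Td) - Real.log c ≤ Real.log cK := by
      rw [Real.log_mul (ne_of_gt hcpos') (by linarith)]
      have : Real.log (Td : ℝ) ≤ Real.log (cK : ℝ) := by
        apply Real.log_le_log (by linarith)
        exact_mod_cast htd
      linarith
    calc ∑ ψ ∈ ImS, (Nc C S ψ : ℝ) * (Real.log ((c : ℝ) * (Tt ψ : ℝ)^d) - Real.log (Nc C S ψ))
        ≤ (c:ℝ) * (Real.log ((c:ℝ) * Td) - Real.log c) := hls
      _ ≤ c * Real.log cK := by
          apply mul_le_mul_of_nonneg_left hcKle (le_of_lt hcpos')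
  -- assemble
  have hE : (d:ℝ) * Ent C W - ((d:ℝ) - 1) * Ent C S
      = ∑ f ∈ C, (Real.log c + ((d:ℝ) - 1) * Real.log (Nc C S (r S f))
          - (d:ℝ) * Real.log (Nc C W (r W f))) := by
    simp only [Ent, Finset.mul_sum, ← Finset.sum_sub_distrib]
    apply Finset.sum_congr rfl
    intro f hf
    ring
  rw [hE,
    ← Finset.sum_fiberwise_of_maps_to (fun f hf => Finset.mem_image_of_mem (r S) hf)
      (fun f => (Real.log c + ((d:ℝ) - 1) * Real.log (Nc C S (r S f))
        - (d:ℝ) * Real.log (Nc C W (r W f))))]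
  exact le_trans (Finset.sum_le_sum hinner) houter

lemma chain_lower (ord : V → ℕ) (hord : Function.Injective ord) (A S : Finset V) (hSA : S ⊆ A) :
    ∑ x ∈ S, (Ent C (A.filter (fun z => ord z < ord x + 1))
        - Ent C (A.filter (fun z => ord z < ord x))) ≤ Ent C S := by
  have aux : ∀ j : ℕ, ∑ x ∈ S.filter (fun x => ord x < j),
      (Ent C (A.filter (fun z => ord z < ord x + 1))
        - Ent C (A.filter (fun z => ord z < ord x)))
      ≤ Ent C (S.filter (fun x => ord x < j)) := by
    intro j
    induction j with
    | zero =>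
      simp only [Nat.not_lt_zero, Finset.filter_false, Ent_empty, Finset.sum_empty]
      exact le_refl 0
    | succ j ih =>
      by_cases hx : ∃ x ∈ S, ord x = j
      · obtain ⟨x₀, hx₀S, hx₀⟩ := hx
        have hxnotin : x₀ ∉ S.filter (fun x => ord x < j) := by simp [hx₀]
        have hSfe : S.filter (fun x => ord x < j+1)
            = insert x₀ (S.filter (fun x => ord x < j)) := by
          ext z
          simp only [Finset.mem_insert, Finset.mem_filter]
          constructor
          · rintro ⟨hz, hlt⟩
            rcases Nat.lt_succ_iff_lt_or_eq.1 hlt with h | h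
            · exact Or.inr ⟨hz, h⟩
            · exact Or.inl (hord (h.trans hx₀.symm))
          · rintro (rfl | ⟨hz, hlt⟩)
            · exact ⟨hx₀S, by omega⟩
            · exact ⟨hz, by omega⟩
        have hsub := submod C (S.filter (fun x => ord x < j+1)) (A.filter (fun z => ord z < j))
        have hU : S.filter (fun x => ord x < j+1) ∪ A.filter (fun z => ord z < j)
            = A.filter (fun z => ord z < j+1) := by
          ext z
          simp only [Finset.mem_union, Finset.mem_filter]
          constructor
          · rintro (⟨hz, hlt⟩ | ⟨hz, hlt⟩)
            · exact ⟨hSA hz, hlt⟩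
            · exact ⟨hz, by omega⟩
          · rintro ⟨hz, hlt⟩
            rcases Nat.lt_succ_iff_lt_or_eq.1 hlt with h | h
            · exact Or.inr ⟨hz, h⟩
            · have : z = x₀ := hord (by rw [h, hx₀])
              subst this
              exact Or.inl ⟨hx₀S, by omega⟩
        have hI : S.filter (fun x => ord x < j+1) ∩ A.filter (fun z => ord z < j)
            = S.filter (fun x => ord x < j) := by
          ext z
          simp only [Finset.mem_inter, Finset.mem_filter]
          constructor
          · rintro ⟨⟨hzS, -⟩, ⟨-, hlt⟩⟩
            exact ⟨hzS, hlt⟩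
          · rintro ⟨hzS, hlt⟩
            exact ⟨⟨hzS, by omega⟩, ⟨hSA hzS, hlt⟩⟩
        rw [hU, hI, hSfe] at hsub
        rw [hSfe, Finset.sum_insert hxnotin, hx₀]
        linarith [ih, hsub]
      · have he : S.filter (fun x => ord x < j+1) = S.filter (fun x => ord x < j) := by
          ext z
          simp only [Finset.mem_filter]
          constructor
          · rintro ⟨hz, hlt⟩
            refine ⟨hz, ?_⟩
            rcases Nat.lt_succ_iff_lt_or_eq.1 hlt with h | h
            · exact h
            · exact absurd ⟨z, hz, h⟩ hx
          · rintro ⟨hz, hlt⟩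
            exact ⟨hz, by omega⟩
        rw [he]
        exact ih
  have hfin : S.filter (fun x => ord x < A.sup ord + 1) = S :=
    Finset.filter_true_of_mem (fun x hx => Nat.lt_succ_of_le (Finset.le_sup (hSA hx)))
  have := aux (A.sup ord + 1)
  rwa [hfin] at this

lemma chain_upper (ord : V → ℕ) (hord : Function.Injective ord) (A B : Finset V)
    (hAB : Disjoint A B) (Nb : V → Finset V) (hNb : ∀ v ∈ B, Nb v ⊆ A) :
    Ent C (A ∪ B) ≤ Ent C A
      + ∑ v ∈ B, (Ent C (insert v (Nb v)) - Ent C (Nb v)) := by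
  have aux : ∀ j : ℕ, Ent C (A ∪ B.filter (fun x => ord x < j)) ≤ Ent C A
      + ∑ v ∈ B.filter (fun x => ord x < j), (Ent C (insert v (Nb v)) - Ent C (Nb v)) := by
    intro j
    induction j with
    | zero =>
      simp only [Nat.not_lt_zero, Finset.filter_false, Finset.sum_empty, Finset.union_empty]
      linarith
    | succ j ih =>
      by_cases hx : ∃ x ∈ B, ord x = j
      · obtain ⟨v₀, hv₀B, hv₀⟩ := hx
        have hv₀A : v₀ ∉ A := Finset.disjoint_right.1 hAB hv₀B
        have hvnotin : v₀ ∉ B.filter (fun x => ord x < j) := by simp [hv₀]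
        have hBfe : B.filter (fun x => ord x < j+1)
            = insert v₀ (B.filter (fun x => ord x < j)) := by
          ext z
          simp only [Finset.mem_insert, Finset.mem_filter]
          constructor
          · rintro ⟨hz, hlt⟩
            rcases Nat.lt_succ_iff_lt_or_eq.1 hlt with h | h
            · exact Or.inr ⟨hz, h⟩
            · exact Or.inl (hord (h.trans hv₀.symm))
          · rintro (rfl | ⟨hz, hlt⟩)
            · exact ⟨hv₀B, by omega⟩
            · exact ⟨hz, by omega⟩
        have hsub := submod C (insert v₀ (Nb v₀)) (A ∪ B.filter (fun x => ord x < j))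
        have hU : insert v₀ (Nb v₀) ∪ (A ∪ B.filter (fun x => ord x < j))
            = A ∪ B.filter (fun x => ord x < j+1) := by
          ext z
          simp only [Finset.mem_union, Finset.mem_insert, Finset.mem_filter]
          constructor
          · rintro ((rfl | hz) | (hz | ⟨hz, hlt⟩))
            · exact Or.inr ⟨hv₀B, by omega⟩
            · exact Or.inl (hNb v₀ hv₀B hz)
            · exact Or.inl hz
            · exact Or.inr ⟨hz, by omega⟩
          · rintro (hz | ⟨hz, hlt⟩)
            · exact Or.inr (Or.inl hz)
            · rcases Nat.lt_succ_iff_lt_or_eq.1 hlt with h | h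
              · exact Or.inr (Or.inr ⟨hz, h⟩)
              · exact Or.inl (Or.inl (hord (h.trans hv₀.symm)))
        have hI : insert v₀ (Nb v₀) ∩ (A ∪ B.filter (fun x => ord x < j))
            = Nb v₀ := by
          ext z
          simp only [Finset.mem_inter, Finset.mem_union, Finset.mem_insert, Finset.mem_filter]
          constructor
          · rintro ⟨(rfl | hz), (hz2 | ⟨-, hlt⟩)⟩
            · exact absurd hz2 hv₀A
            · omega
            · exact hz
            · exact hz
          · intro hz
            exact ⟨Or.inr hz, Or.inl (hNb v₀ hv₀B hz)⟩
        rw [hU, hI, hBfe] at hsub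
        rw [hBfe, Finset.sum_insert hvnotin]
        linarith [ih, hsub]
      · have he : B.filter (fun x => ord x < j+1) = B.filter (fun x => ord x < j) := by
          ext z
          simp only [Finset.mem_filter]
          constructor
          · rintro ⟨hz, hlt⟩
            refine ⟨hz, ?_⟩
            rcases Nat.lt_succ_iff_lt_or_eq.1 hlt with h | h
            · exact h
            · exact absurd ⟨z, hz, h⟩ hx
          · rintro ⟨hz, hlt⟩
            exact ⟨hz, by omega⟩
        rw [he]
        exact ih
  have hfin : B.filter (fun x => ord x < B.sup ord + 1) = B :=
    Finset.filter_true_of_mem (fun x hx => Nat.lt_succ_of_le (Finset.le_sup hx))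
  have := aux (B.sup ord + 1)
  rwa [hfin] at this

end
end GT

open Finset

section Graph

/-- The number of proper colorings of a graph as the cardinality of a finset of functions. -/
lemma card_colorings (n q : ℕ) (G : SimpleGraph (Fin n)) [DecidableRel G.Adj] :
    Nat.card (G.Coloring (Fin q))
      = ((Finset.univ : Finset (Fin n → Fin q)).filter
          (fun f => ∀ v w, G.Adj v w → f v ≠ f w)).card := by
  classical
  set C := (Finset.univ : Finset (Fin n → Fin q)).filter
    (fun f => ∀ v w, G.Adj v w → f v ≠ f w) with hC
  have e : G.Coloring (Fin q) ≃ {f // f ∈ C} :=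
  { toFun := fun c => ⟨c, by
      rw [hC, Finset.mem_filter]
      exact ⟨Finset.mem_univ _, fun v w h => c.valid h⟩⟩
    invFun := fun f => SimpleGraph.Coloring.mk f.1
      (fun {v w} h => (Finset.mem_filter.1 f.2).2 v w h)
    left_inv := fun c => rfl
    right_inv := fun f => rfl }
  rw [Nat.card_congr e, Nat.card_eq_fintype_card, Fintype.card_coe]

/-- Lower bound for the number of colorings of the complete bipartite graph. -/
lemma cK_lower (d q : ℕ) (hq : 2 ≤ q) :
    ∑ g : Fin d → Fin q, ((Finset.univ.filter (fun k : Fin q => ∀ i, g i ≠ k)).card) ^ d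
      ≤ Nat.card ((completeBipartiteGraph (Fin d) (Fin d)).Coloring (Fin q)) := by
  classical
  haveI : Fintype ((completeBipartiteGraph (Fin d) (Fin d)).Coloring (Fin q)) :=
    Fintype.ofInjective (fun c => (c : Fin d ⊕ Fin d → Fin q)) DFunLike.coe_injective
  set F : (Σ g : Fin d → Fin q, (Fin d → {k : Fin q // ∀ i, g i ≠ k})) →
      (completeBipartiteGraph (Fin d) (Fin d)).Coloring (Fin q) := fun p =>
    SimpleGraph.Coloring.mk (Sum.elim p.1 (fun j => (p.2 j).1)) (by
      rintro (i | i) (j | j) hadj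
      · simp [completeBipartiteGraph] at hadj
      · exact fun h => ((p.2 j).2 i) h
      · exact fun h => ((p.2 i).2 j) h.symm
      · simp [completeBipartiteGraph] at hadj) with hF
  have hinj : Function.Injective F := by
    rintro ⟨g, h2⟩ ⟨g', h2'⟩ h
    have hcoe : Sum.elim g (fun j => (h2 j).1) = Sum.elim g' (fun j => (h2' j).1) :=
      congrArg DFunLike.coe h
    have hg : g = g' := funext fun i => congrFun hcoe (Sum.inl i)
    subst hg
    have hh : h2 = h2' := funext fun j => Subtype.ext (congrFun hcoe (Sum.inr j))
    rw [hh]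
  have hcard := Fintype.card_le_of_injective F hinj
  rw [Nat.card_eq_fintype_card]
  calc ∑ g : Fin d → Fin q, ((Finset.univ.filter (fun k : Fin q => ∀ i, g i ≠ k)).card) ^ d
      = Fintype.card (Σ g : Fin d → Fin q, (Fin d → {k : Fin q // ∀ i, g i ≠ k})) := by
        rw [Fintype.card_sigma]
        apply Finset.sum_congr rfl
        intro g _
        rw [Fintype.card_fun, Fintype.card_subtype, Fintype.card_fin]
    _ ≤ _ := hcard

lemma cK_pos (d q : ℕ) (hq : 2 ≤ q) :
    1 ≤ Nat.card ((completeBipartiteGraph (Fin d) (Fin d)).Coloring (Fin q)) := by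
  classical
  refine le_trans ?_ (cK_lower d q hq)
  have hq0 : 0 < q := by omega
  have hq1 : 1 < q := by omega
  set g0 : Fin d → Fin q := fun _ => ⟨0, hq0⟩ with hg0
  have h1 : (⟨1, hq1⟩ : Fin q) ∈ Finset.univ.filter
      (fun k : Fin q => ∀ i : Fin d, g0 i ≠ k) := by
    rw [Finset.mem_filter]
    refine ⟨Finset.mem_univ _, fun i => ?_⟩
    rw [hg0]
    simp [Fin.ext_iff]
  calc 1 ≤ ((Finset.univ.filter (fun k : Fin q => ∀ i : Fin d, g0 i ≠ k)).card) ^ d :=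
        Nat.one_le_pow _ _ (Finset.card_pos.2 ⟨_, h1⟩)
    _ ≤ ∑ g : Fin d → Fin q, ((Finset.univ.filter (fun k : Fin q => ∀ i, g i ≠ k)).card) ^ d :=
        Finset.single_le_sum (f := fun g : Fin d → Fin q =>
          ((Finset.univ.filter (fun k : Fin q => ∀ i, g i ≠ k)).card) ^ d)
          (fun g _ => Nat.zero_le _) (Finset.mem_univ _)

lemma htd_bound (n q dd : ℕ) (hq : 2 ≤ q) (G : SimpleGraph (Fin n)) [DecidableRel G.Adj]
    (C : Finset (Fin n → Fin q)) (hC : ∀ f ∈ C, ∀ v w : Fin n, G.Adj v w → f v ≠ f w)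
    (v : Fin n) (hdeg : (G.neighborFinset v).card = dd) :
    ∑ ψ ∈ C.image (GT.r (G.neighborFinset v)),
        ((C.filter (fun g => GT.r (G.neighborFinset v) g = ψ)).image
          (GT.r (insert v (G.neighborFinset v)))).card ^ dd
      ≤ ∑ g : Fin dd → Fin q,
          ((Finset.univ.filter (fun k : Fin q => ∀ i, g i ≠ k)).card) ^ dd := by
  classical
  set Nv := G.neighborFinset v with hNv
  set W := insert v Nv with hW
  set e := Nv.orderIsoOfFin hdeg with he
  have hq0 : 0 < q := by omega
  set k0 : Fin q := ⟨0, hq0⟩ with hk0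
  set gmap : (Fin n → Option (Fin q)) → (Fin dd → Fin q) :=
    fun ψ i => (ψ (e i).1).getD k0 with hgmap
  -- value of gmap on restrictions
  have hval : ∀ f : Fin n → Fin q, ∀ i : Fin dd, gmap (GT.r Nv f) i = f (e i).1 := by
    intro f i
    rw [hgmap]
    simp only [GT.r, (e i).2, if_pos, Option.getD_some]
  have havail : ∀ g : Fin n → Fin q, ∀ x ∈ Nv, G.Adj v x := by
    intro g x hx
    exact (G.mem_neighborFinset v x).1 hx
  -- step A : pointwise bound
  have hstepA : ∀ ψ ∈ C.image (GT.r Nv),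
      ((C.filter (fun g => GT.r Nv g = ψ)).image (GT.r W)).card ^ dd
        ≤ ((Finset.univ.filter (fun k : Fin q => ∀ i, gmap ψ i ≠ k)).card) ^ dd := by
    intro ψ hψ
    apply Nat.pow_le_pow_left
    apply Finset.card_le_card_of_injOn (fun φ => (φ v).getD k0)
    · -- maps into the available colors
      intro φ hφ
      obtain ⟨f', hf', rfl⟩ := Finset.mem_image.1 hφ
      rw [Finset.mem_filter] at hf'
      have hφv : GT.r W f' v = some (f' v) := by
        simp only [GT.r, hW, Finset.mem_insert_self, if_pos]
      rw [Finset.mem_coe, Finset.mem_filter]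
      refine ⟨Finset.mem_univ _, fun i => ?_⟩
      beta_reduce
      rw [hφv]
      simp only [Option.getD_some]
      rw [← hf'.2, hval f' i]
      exact Ne.symm (hC f' hf'.1 v (e i).1 (havail f' _ (e i).2))
    · -- injective
      intro φ hφ φ' hφ' heq
      simp only [Finset.coe_image, Set.mem_image, Finset.mem_coe] at hφ hφ'
      obtain ⟨f1, hf1, rfl⟩ := hφ
      obtain ⟨f2, hf2, rfl⟩ := hφ'
      rw [Finset.mem_filter] at hf1 hf2
      have h1v : GT.r W f1 v = some (f1 v) := by
        simp only [GT.r, hW, Finset.mem_insert_self, if_pos]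
      have h2v : GT.r W f2 v = some (f2 v) := by
        simp only [GT.r, hW, Finset.mem_insert_self, if_pos]
      have hv12 : f1 v = f2 v := by
        have := heq
        simp only [h1v, h2v, Option.getD_some] at this
        exact this
      funext x
      by_cases hxv : x = v
      · subst hxv
        rw [h1v, h2v, hv12]
      by_cases hxN : x ∈ Nv
      · have hxW' : x ∈ W := by rw [hW]; exact Finset.mem_insert_of_mem hxN
        have hx1 : GT.r W f1 x = some (f1 x) := if_pos hxW'
        have hx2 : GT.r W f2 x = some (f2 x) := if_pos hxW'
        have a1 : some (f1 x) = ψ x := by rw [← hf1.2]; exact (if_pos hxN : GT.r Nv f1 x = _).symm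
        have a2 : some (f2 x) = ψ x := by rw [← hf2.2]; exact (if_pos hxN : GT.r Nv f2 x = _).symm
        rw [hx1, hx2, a1, a2]
      · have hxW : x ∉ W := by
          rw [hW, Finset.mem_insert]
          push_neg
          exact ⟨hxv, hxN⟩
        simp [GT.r, hxW]
  -- step B : sum over distinct images
  calc ∑ ψ ∈ C.image (GT.r Nv),
        ((C.filter (fun g => GT.r Nv g = ψ)).image (GT.r W)).card ^ dd
      ≤ ∑ ψ ∈ C.image (GT.r Nv),
          ((Finset.univ.filter (fun k : Fin q => ∀ i, gmap ψ i ≠ k)).card) ^ dd :=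
        Finset.sum_le_sum hstepA
    _ = ∑ g ∈ (C.image (GT.r Nv)).image gmap,
          ((Finset.univ.filter (fun k : Fin q => ∀ i, g i ≠ k)).card) ^ dd := by
        refine (Finset.sum_image (f := fun g : Fin dd → Fin q =>
          ((Finset.univ.filter (fun k : Fin q => ∀ i, g i ≠ k)).card) ^ dd)
          (g := gmap) (s := C.image (GT.r Nv)) ?_).symm
        intro ψ hψ ψ' hψ' hgg
        obtain ⟨f1, hf1, rfl⟩ := Finset.mem_image.1 hψ
        obtain ⟨f2, hf2, rfl⟩ := Finset.mem_image.1 hψ'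
        funext x
        by_cases hxN : x ∈ Nv
        · set i := e.symm ⟨x, hxN⟩ with hi
          have hei : ((e i : {y // y ∈ Nv}) : Fin n) = x := by
            rw [hi, OrderIso.apply_symm_apply]
          have e1 : GT.r Nv f1 x = some (gmap (GT.r Nv f1) i) := by
            rw [hval f1 i, hei]
            simp only [GT.r, hxN, if_pos]
          have e2 : GT.r Nv f2 x = some (gmap (GT.r Nv f2) i) := by
            rw [hval f2 i, hei]
            simp only [GT.r, hxN, if_pos]
          rw [e1, e2, hgg]
        · simp [GT.r, hxN]
    _ ≤ ∑ g : Fin dd → Fin q,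
          ((Finset.univ.filter (fun k : Fin q => ∀ i, g i ≠ k)).card) ^ dd :=
        Finset.sum_le_sum_of_subset (Finset.subset_univ _)

end Graph

open Finset

/-- Galvin–Tetali: for `d ≥ 2`, `n ≥ d+1`, `q ≥ 2`, an `n`-vertex `d`-regular bipartite
graph `G` satisfies `c_q(G)^{2d} ≤ c_q(K_{d,d})ⁿ`, where `c_q` counts proper `q`-colorings. -/
theorem colorings_le_Kdd (d n q : ℕ) (hd : 2 ≤ d) (hn : d + 1 ≤ n) (hq : 2 ≤ q)
    (G : SimpleGraph (Fin n)) [DecidableRel G.Adj] (hreg : G.IsRegularOfDegree d) (hbip : G.Colorable 2) :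
    (Nat.card (G.Coloring (Fin q))) ^ (2 * d) ≤
      (Nat.card ((completeBipartiteGraph (Fin d) (Fin d)).Coloring (Fin q))) ^ n := by
  classical
  rw [card_colorings n q G]
  set cK : ℕ := Nat.card ((completeBipartiteGraph (Fin d) (Fin d)).Coloring (Fin q)) with hcKdef
  have hcK1 : 1 ≤ cK := cK_pos d q hq
  set C : Finset (Fin n → Fin q) := (Finset.univ).filter
    (fun f => ∀ v w, G.Adj v w → f v ≠ f w) with hCdef
  have hCmem : ∀ f ∈ C, ∀ v w, G.Adj v w → f v ≠ f w := fun f hf => (Finset.mem_filter.1 hf).2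
  by_cases hc0 : C.card = 0
  · rw [hc0]
    rw [Nat.zero_pow (by omega : 0 < 2*d)]
    exact Nat.zero_le _
  have hc1 : 0 < C.card := Nat.pos_of_ne_zero hc0
  have hcR : (0:ℝ) < C.card := by exact_mod_cast hc1
  have hcKR : (0:ℝ) < cK := by exact_mod_cast hcK1
  -- bipartition
  obtain ⟨col⟩ := hbip
  set A : Finset (Fin n) := Finset.univ.filter (fun x => col x = 0) with hA
  set B : Finset (Fin n) := Finset.univ.filter (fun x => col x ≠ 0) with hB
  have hAB : Disjoint A B := by
    rw [Finset.disjoint_left]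
    intro a ha hb
    rw [hA, Finset.mem_filter] at ha
    rw [hB, Finset.mem_filter] at hb
    exact hb.2 ha.2
  have hABu : A ∪ B = Finset.univ := by
    ext x
    simp only [hA, hB, Finset.mem_union, Finset.mem_filter, Finset.mem_univ, true_and, iff_true]
    exact em _
  have hfin2 : ∀ x y : Fin 2, x ≠ y → x ≠ 0 → y = 0 := by decide
  have hNB : ∀ v ∈ B, G.neighborFinset v ⊆ A := by
    intro v hv x hx
    rw [hB, Finset.mem_filter] at hv
    rw [G.mem_neighborFinset] at hx
    rw [hA, Finset.mem_filter]
    exact ⟨Finset.mem_univ _, hfin2 _ _ (col.valid hx) hv.2⟩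
  have hNA : ∀ a ∈ A, G.neighborFinset a ⊆ B := by
    intro a ha x hx
    rw [hA, Finset.mem_filter] at ha
    rw [G.mem_neighborFinset] at hx
    rw [hB, Finset.mem_filter]
    refine ⟨Finset.mem_univ _, fun hx0 => (col.valid hx) ?_⟩
    rw [ha.2, hx0]
  have hdegN : ∀ v : Fin n, (G.neighborFinset v).card = d := by
    intro v
    rw [G.card_neighborFinset_eq_degree]
    exact hreg v
  have hNxB : ∀ x ∈ A, B.filter (fun v => x ∈ G.neighborFinset v) = G.neighborFinset x := by
    intro x hx
    ext v
    rw [Finset.mem_filter, G.mem_neighborFinset, G.mem_neighborFinset]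
    constructor
    · rintro ⟨hvB, hadj⟩
      exact hadj.symm
    · intro hadj
      exact ⟨hNA x hx ((G.mem_neighborFinset x v).2 hadj), hadj.symm⟩
  -- counting : |A| = |B|
  have hcount : A.card * d = B.card * d := by
    have hNa : ∀ a ∈ A, G.neighborFinset a = B.filter (fun b => G.Adj a b) := by
      intro a ha
      ext b
      rw [Finset.mem_filter, G.mem_neighborFinset]
      exact ⟨fun h => ⟨hNA a ha ((G.mem_neighborFinset a b).2 h), h⟩, fun h => h.2⟩
    have hNb : ∀ b ∈ B, A.filter (fun a => G.Adj a b) = G.neighborFinset b := by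
      intro b hb
      ext a
      rw [Finset.mem_filter, G.mem_neighborFinset]
      constructor
      · rintro ⟨haA, hadj⟩
        exact hadj.symm
      · intro hadj
        exact ⟨hNB b hb ((G.mem_neighborFinset b a).2 hadj), hadj.symm⟩
    calc A.card * d = ∑ a ∈ A, d := by rw [Finset.sum_const, smul_eq_mul]
      _ = ∑ a ∈ A, ∑ b ∈ B, (if G.Adj a b then 1 else 0) := by
          apply Finset.sum_congr rfl
          intro a ha
          rw [← Finset.card_filter, ← hNa a ha, hdegN a]
      _ = ∑ b ∈ B, ∑ a ∈ A, (if G.Adj a b then 1 else 0) := Finset.sum_comm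
      _ = ∑ b ∈ B, d := by
          apply Finset.sum_congr rfl
          intro b hb
          rw [← Finset.card_filter, hNb b hb, hdegN b]
      _ = B.card * d := by rw [Finset.sum_const, smul_eq_mul]
  have hABcard : A.card = B.card := Nat.eq_of_mul_eq_mul_right (by omega) hcount
  have hnAB : A.card + B.card = n := by
    rw [← Finset.card_union_of_disjoint hAB, hABu, Finset.card_univ, Fintype.card_fin]
  have h2B : 2 * B.card = n := by omega
  -- entropy bounds
  have hEuniv : GT.Ent C Finset.univ = C.card * Real.log C.card := GT.Ent_univ C
  have hupper := GT.chain_upper C Fin.val Fin.val_injective A B hAB (fun v => G.neighborFinset v) hNB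
  rw [hABu] at hupper
  have hchainv : ∀ v ∈ B, ∑ x ∈ G.neighborFinset v,
      (GT.Ent C (A.filter (fun z => z.val < x.val + 1))
        - GT.Ent C (A.filter (fun z => z.val < x.val))) ≤ GT.Ent C (G.neighborFinset v) :=
    fun v hv => GT.chain_lower C Fin.val Fin.val_injective A _ (hNB v hv)
  set F : Fin n → ℝ := fun x => GT.Ent C (A.filter (fun z => z.val < x.val + 1))
    - GT.Ent C (A.filter (fun z => z.val < x.val)) with hF
  have hF0 : ∀ x : Fin n, 0 ≤ F x := by
    intro x
    apply sub_nonneg.2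
    apply GT.Ent_mono
    intro z hz
    simp only [Finset.mem_filter] at hz ⊢
    exact ⟨hz.1, by omega⟩
  have htele : ∑ x ∈ A, F x = GT.Ent C A := by
    have hinj : ∀ x ∈ A, ∀ y ∈ A, Fin.val x = Fin.val y → x = y :=
      fun x _ y _ h => Fin.val_injective h
    have h1 : ∑ i ∈ A.image Fin.val,
        (GT.Ent C (A.filter (fun z => z.val < i + 1))
          - GT.Ent C (A.filter (fun z => z.val < i))) = ∑ x ∈ A, F x :=
      Finset.sum_image hinj
    have h2 : ∑ i ∈ A.image Fin.val,
        (GT.Ent C (A.filter (fun z => z.val < i + 1))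
          - GT.Ent C (A.filter (fun z => z.val < i)))
        = ∑ i ∈ Finset.range n,
        (GT.Ent C (A.filter (fun z => z.val < i + 1))
          - GT.Ent C (A.filter (fun z => z.val < i))) := by
      apply Finset.sum_subset
      · intro i hi
        obtain ⟨x, hx, rfl⟩ := Finset.mem_image.1 hi
        exact Finset.mem_range.2 x.isLt
      · intro i hi hnoti
        have : A.filter (fun z => z.val < i + 1) = A.filter (fun z => z.val < i) := by
          ext z
          simp only [Finset.mem_filter]
          constructor
          · rintro ⟨hz, hlt⟩
            refine ⟨hz, ?_⟩
            rcases Nat.lt_succ_iff_lt_or_eq.1 hlt with h | h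
            · exact h
            · exact absurd (Finset.mem_image.2 ⟨z, hz, h⟩) hnoti
          · rintro ⟨hz, hlt⟩
            exact ⟨hz, by omega⟩
        rw [this, sub_self]
    have h3 : ∑ i ∈ Finset.range n,
        (GT.Ent C (A.filter (fun z => z.val < i + 1))
          - GT.Ent C (A.filter (fun z => z.val < i)))
        = GT.Ent C (A.filter (fun z => z.val < n)) - GT.Ent C (A.filter (fun z => z.val < 0)) :=
      Finset.sum_range_sub (fun i => GT.Ent C (A.filter (fun z => z.val < i))) n
    have h4 : A.filter (fun z : Fin n => z.val < n) = A :=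
      Finset.filter_true_of_mem (fun z _ => z.isLt)
    have h5 : A.filter (fun z : Fin n => z.val < 0) = (∅ : Finset (Fin n)) := by
      apply Finset.filter_false_of_mem
      intro z _
      omega
    rw [← h1, h2, h3, h4, h5, GT.Ent_empty, sub_zero]
  have hswap : ∑ v ∈ B, ∑ x ∈ G.neighborFinset v, F x = ∑ x ∈ A, (d : ℝ) * F x := by
    have e1 : ∀ v ∈ B, ∑ x ∈ G.neighborFinset v, F x
        = ∑ x ∈ Finset.univ, (if x ∈ G.neighborFinset v then F x else 0) := by
      intro v hv
      rw [Finset.sum_ite_mem, Finset.univ_inter]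
    rw [Finset.sum_congr rfl e1, Finset.sum_comm]
    have e2 : ∀ x ∈ (Finset.univ : Finset (Fin n)),
        ∑ v ∈ B, (if x ∈ G.neighborFinset v then F x else 0)
        = ((B.filter (fun v => x ∈ G.neighborFinset v)).card : ℝ) * F x := by
      intro x _
      rw [← Finset.sum_filter, Finset.sum_const, nsmul_eq_mul]
    rw [Finset.sum_congr rfl e2]
    rw [← Finset.sum_subset (Finset.subset_univ A)]
    · apply Finset.sum_congr rfl
      intro x hx
      rw [hNxB x hx, hdegN x]
    · intro x _ hxA
      have : B.filter (fun v => x ∈ G.neighborFinset v) = ∅ := by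
        apply Finset.filter_false_of_mem
        intro v hv hmem
        exact hxA (hNB v hv hmem)
      rw [this, Finset.card_empty, Nat.cast_zero, zero_mul]
  have hlow : (d:ℝ) * GT.Ent C A ≤ ∑ v ∈ B, GT.Ent C (G.neighborFinset v) := by
    calc (d:ℝ) * GT.Ent C A = ∑ x ∈ A, (d:ℝ) * F x := by rw [← htele, Finset.mul_sum]
      _ = ∑ v ∈ B, ∑ x ∈ G.neighborFinset v, F x := hswap.symm
      _ ≤ ∑ v ∈ B, GT.Ent C (G.neighborFinset v) := Finset.sum_le_sum hchainv
  -- local bound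
  have hloc : ∀ v ∈ B, GT.Ent C (G.neighborFinset v)
      + (d:ℝ) * (GT.Ent C (insert v (G.neighborFinset v)) - GT.Ent C (G.neighborFinset v))
      ≤ C.card * Real.log cK := by
    intro v hv
    have h1 := GT.local_bound C (G.neighborFinset v) v d cK (by omega)
      (le_trans (htd_bound n q d hq G C hCmem v (hdegN v)) (cK_lower d q hq))
    have h2 : GT.Ent C (G.neighborFinset v)
        + (d:ℝ) * (GT.Ent C (insert v (G.neighborFinset v)) - GT.Ent C (G.neighborFinset v))
        = (d:ℝ) * GT.Ent C (insert v (G.neighborFinset v))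
          - ((d:ℝ) - 1) * GT.Ent C (G.neighborFinset v) := by ring
    rw [h2]
    exact h1
  -- main inequality
  have hmain : (d:ℝ) * ((C.card : ℝ) * Real.log C.card)
      ≤ (B.card : ℝ) * ((C.card : ℝ) * Real.log cK) := by
    calc (d:ℝ) * ((C.card : ℝ) * Real.log C.card) = (d:ℝ) * GT.Ent C Finset.univ := by
          rw [hEuniv]
      _ ≤ (d:ℝ) * (GT.Ent C A + ∑ v ∈ B, (GT.Ent C (insert v (G.neighborFinset v))
            - GT.Ent C (G.neighborFinset v))) := by
          apply mul_le_mul_of_nonneg_left hupper (by positivity)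
      _ = (d:ℝ) * GT.Ent C A + ∑ v ∈ B, (d:ℝ) * (GT.Ent C (insert v (G.neighborFinset v))
            - GT.Ent C (G.neighborFinset v)) := by
          rw [mul_add, Finset.mul_sum]
      _ ≤ ∑ v ∈ B, GT.Ent C (G.neighborFinset v) + ∑ v ∈ B, (d:ℝ) * (GT.Ent C (insert v (G.neighborFinset v))
            - GT.Ent C (G.neighborFinset v)) := by
          exact add_le_add_left hlow _
      _ = ∑ v ∈ B, (GT.Ent C (G.neighborFinset v) + (d:ℝ) * (GT.Ent C (insert v (G.neighborFinset v))
            - GT.Ent C (G.neighborFinset v))) := Finset.sum_add_distrib.symm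
      _ ≤ ∑ v ∈ B, (C.card : ℝ) * Real.log cK := Finset.sum_le_sum hloc
      _ = (B.card : ℝ) * ((C.card : ℝ) * Real.log cK) := by
          rw [Finset.sum_const, nsmul_eq_mul]
  -- numeric conclusion
  rw [show (d:ℝ) * ((C.card : ℝ) * Real.log C.card)
      = (C.card:ℝ) * ((d:ℝ) * Real.log C.card) from by ring,
    show (B.card : ℝ) * ((C.card : ℝ) * Real.log cK)
      = (C.card:ℝ) * ((B.card:ℝ) * Real.log cK) from by ring] at hmain
  have h7 : (d:ℝ) * Real.log C.card ≤ (B.card:ℝ) * Real.log cK :=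
    le_of_mul_le_mul_left hmain hcR
  have h2B' : (2:ℝ) * (B.card:ℝ) = n := by exact_mod_cast h2B
  have h8 : ((2*d : ℕ):ℝ) * Real.log C.card ≤ (n:ℝ) * Real.log cK := by
    push_cast
    have h9 := mul_le_mul_of_nonneg_left h7 (by norm_num : (0:ℝ) ≤ 2)
    calc 2*(d:ℝ)*Real.log (C.card : ℝ) = 2*((d:ℝ)*Real.log (C.card : ℝ)) := by ring
      _ ≤ 2*(((B.card : ℕ):ℝ)*Real.log (cK : ℝ)) := h9
      _ = (2*((B.card : ℕ):ℝ))*Real.log (cK : ℝ) := by ring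
      _ = (n:ℝ) * Real.log (cK : ℝ) := by rw [h2B']
  have hfinal : ((C.card:ℝ))^(2*d) ≤ ((cK:ℝ))^n := by
    have hlog : Real.log (((C.card:ℝ))^(2*d)) ≤ Real.log (((cK:ℝ))^n) := by
      rw [Real.log_pow, Real.log_pow]
      exact h8
    exact (Real.log_le_log_iff (pow_pos hcR _) (pow_pos hcKR _)).1 hlog
  exact_mod_cast hfinal
end
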